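/- arXiv:2504.14916 — 5 statements merged into one kernel-verified Lean document; each statement's English description precedes it below -/
import Mathlib

section
/- Let Γ be a finite connected simple graph and R an equivalence relation on the vertex set of Γ, with equivalence classes C_1, …, C_k of sizes n_1, …, n_k. Then: (a) any two vertices lying in the same class C_i have the same degree in the R-super Γ graph Γ^R, say d_i; and (b) the Sombor characteristic polynomial of Γ^R equals χ(N, x) · ∏_{i=1}^{k} (x + d_i·√2)^{ n_i − 1 }, where N is the k×k real matrix whose (i,i) entry is (n_i − 1)·d_i·√2 and whose (i,j) entry for i ≠ j is n_j·√(d_i² + d_j²) if some vertex of C_i is adjacent in Γ^R to some vertex of C_j, and 0 otherwise, and χ(N, x) denotes the characteristic polynomial of N. -/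
open Polynomial
open scoped Classical

/-- Degree of a vertex. -/
noncomputable def sdeg {V : Type*} (G : SimpleGraph V) (v : V) : ℕ := {u | G.Adj v u}.ncard

/-- Sombor matrix of a graph. -/
noncomputable def somborMatrix {V : Type*} (G : SimpleGraph V) : Matrix V V ℝ :=
  Matrix.of fun u v =>
    if G.Adj u v then Real.sqrt ((sdeg G u : ℝ) ^ 2 + (sdeg G v : ℝ) ^ 2) else 0

/-- Sombor characteristic polynomial det(x·I − S(Γ)). -/
noncomputable def somborCharpoly {V : Type*} [Fintype V] [DecidableEq V] (G : SimpleGraph V) :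
    Polynomial ℝ :=
  (somborMatrix G).charpoly

noncomputable def rt2 : ℝ := Real.sqrt 2

/-- The `R`-super `Γ` graph. -/
def superGraph {V : Type*} (A : SimpleGraph V) (r : V → V → Prop) (hr : Equivalence r) :
    SimpleGraph V where
  Adj x y := x ≠ y ∧ (r x y ∨ ∃ x' y', r x x' ∧ r y y' ∧ A.Adj x' y')
  symm := by
    constructor
    rintro x y ⟨hxy, h | ⟨x', y', hx, hy, hadj⟩⟩
    · exact ⟨hxy.symm, Or.inl (hr.symm h)⟩
    · exact ⟨hxy.symm, Or.inr ⟨y', x', hy, hx, hadj.symm⟩⟩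
  loopless := by constructor; rintro x ⟨h, -⟩; exact h rfl

/-- Same-order relation. -/
def orderRel (G : Type*) [Monoid G] : G → G → Prop := fun x y => orderOf x = orderOf y

theorem orderRel_equivalence (G : Type*) [Monoid G] : Equivalence (orderRel G) :=
  ⟨fun _ => rfl, fun h => h.symm, fun h1 h2 => h1.trans h2⟩

/-- Conjugacy relation. -/
def conjRel (G : Type*) [Group G] : G → G → Prop := fun x y => ∃ a : G, x = a * y * a⁻¹

theorem conjRel_equivalence (G : Type*) [Group G] : Equivalence (conjRel G) := by
  constructor
  · intro x; exact ⟨1, by simp⟩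
  · rintro x y ⟨a, rfl⟩; exact ⟨a⁻¹, by group⟩
  · rintro x y z ⟨a, rfl⟩ ⟨b, rfl⟩; exact ⟨a * b, by group⟩

/-- Commuting graph. -/
def commutingGraph (G : Type*) [Group G] : SimpleGraph G where
  Adj x y := x ≠ y ∧ x * y = y * x
  symm := by constructor; rintro x y ⟨h, c⟩; exact ⟨h.symm, c.symm⟩
  loopless := by constructor; rintro x ⟨h, -⟩; exact h rfl

/-- Power graph. -/
def powerGraph (G : Type*) [Group G] : SimpleGraph G where
  Adj x y := x ≠ y ∧ (x ∈ Subgroup.zpowers y ∨ y ∈ Subgroup.zpowers x)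
  symm := by constructor; rintro x y ⟨h, c⟩; exact ⟨h.symm, c.symm⟩
  loopless := by constructor; rintro x ⟨h, -⟩; exact h rfl

/-- Enhanced power graph. -/
def enhancedPowerGraph (G : Type*) [Group G] : SimpleGraph G where
  Adj x y := x ≠ y ∧ ∃ z : G, x ∈ Subgroup.zpowers z ∧ y ∈ Subgroup.zpowers z
  symm := by constructor; rintro x y ⟨h, z, hx, hy⟩; exact ⟨h.symm, z, hy, hx⟩
  loopless := by constructor; rintro x ⟨h, -⟩; exact h rfl

lemma my_eval_charpoly {n : Type*} [Fintype n] [DecidableEq n] (M : Matrix n n ℝ) (t : ℝ) :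
    M.charpoly.eval t = (t • (1 : Matrix n n ℝ) - M).det := by
  rw [Matrix.charpoly, ← Polynomial.coe_evalRingHom, RingHom.map_det]
  congr 1
  ext i j
  by_cases h : i = j
  · subst h
    simp [Matrix.charmatrix_apply_eq, Matrix.one_apply]
  · simp [Matrix.charmatrix_apply_ne _ _ _ h, Matrix.one_apply, h]

lemma det_factor {V k : Type*} [Fintype V] [Fintype k] [DecidableEq V] [DecidableEq k]
    (cls : V → k) (e : k → ℝ) (t : ℝ) (hf : ∀ i, t + e i ≠ 0)
    (Cm : Matrix k k ℝ) (hdiag : ∀ i, Cm i i = e i)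
    (hsurj : ∀ i, 1 ≤ (Finset.univ.filter fun v => cls v = i).card) :
    (t • (1 : Matrix V V ℝ) -
        Matrix.of (fun u v => if u = v then 0 else Cm (cls u) (cls v))).det =
      (t • (1 : Matrix k k ℝ) -
        Matrix.of (fun i j =>
          if i = j then (((Finset.univ.filter fun v => cls v = i).card : ℝ) - 1) * e i
          else ((Finset.univ.filter fun v => cls v = j).card : ℝ) * Cm i j)).det *
      ∏ i, (t + e i) ^ ((Finset.univ.filter fun v => cls v = i).card - 1) := by
  set n : k → ℕ := fun i => (Finset.univ.filter fun v => cls v = i).card with hn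
  set A : Matrix V k ℝ := Matrix.of (fun u i => if cls u = i then 1 else 0) with hA
  set g : V → ℝ := fun u => t + e (cls u) with hg
  set A' : Matrix V k ℝ := Matrix.of (fun u i => (g u)⁻¹ * (if cls u = i then 1 else 0)) with hA'
  set N : Matrix k k ℝ := Matrix.of (fun i j =>
          if i = j then ((n i : ℝ) - 1) * e i
          else (n j : ℝ) * Cm i j) with hN
  -- step 1: LHS matrix equals diagonal g - A * Cm * Aᵀ
  have h1 : (t • (1 : Matrix V V ℝ) -
      Matrix.of (fun u v => if u = v then 0 else Cm (cls u) (cls v))) =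
      Matrix.diagonal g - A * Cm * A.transpose := by
    ext u v
    have hACA : (A * Cm * A.transpose) u v = Cm (cls u) (cls v) := by
      rw [Matrix.mul_apply]
      have hAC : ∀ j, (A * Cm) u j = Cm (cls u) j := by
        intro j
        rw [Matrix.mul_apply]
        simp [hA, Finset.sum_ite_eq]
      simp only [hAC, Matrix.transpose_apply, hA]
      simp [Finset.sum_ite_eq']
      exact hAC (cls v)
    by_cases h : u = v
    · subst h
      simp [hACA, Matrix.diagonal_apply_eq, Matrix.one_apply, hg, hdiag]
    · simp [hACA, Matrix.diagonal_apply_ne _ h, Matrix.one_apply, h]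
  rw [h1]
  -- step 2: factor out diagonal g
  have hAeq : Matrix.diagonal g * A' = A := by
    ext u i
    simp only [Matrix.diagonal_mul, hA', hA, Matrix.of_apply]
    rw [mul_inv_cancel_left₀ (hf (cls u))]
  have h2 : Matrix.diagonal g - A * Cm * A.transpose =
      Matrix.diagonal g * (1 - A' * (Cm * A.transpose)) := by
    rw [Matrix.mul_sub, Matrix.mul_one, ← Matrix.mul_assoc, hAeq, Matrix.mul_assoc]
  rw [h2, Matrix.det_mul, Matrix.det_one_sub_mul_comm]
  -- step 3: Aᵀ * A' = diagonal (fun i => n i * (t + e i)⁻¹)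
  have h3 : A.transpose * A' = Matrix.diagonal (fun i => (n i : ℝ) * (t + e i)⁻¹) := by
    ext i j
    rw [Matrix.mul_apply]
    by_cases h : i = j
    · subst h
      rw [Matrix.diagonal_apply_eq]
      have heq : ∀ u : V, A.transpose i u * A' u i =
          if cls u = i then (t + e i)⁻¹ else 0 := by
        intro u
        simp only [Matrix.transpose_apply, hA, hA', Matrix.of_apply, hg]
        by_cases hu : cls u = i
        · simp [hu]
        · simp [hu]
      rw [Finset.sum_congr rfl (fun u _ => heq u), ← Finset.sum_filter,
        Finset.sum_const, nsmul_eq_mul]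
    · rw [Matrix.diagonal_apply_ne _ h]
      apply Finset.sum_eq_zero
      intro u _
      simp only [Matrix.transpose_apply, hA, hA', Matrix.of_apply]
      by_cases hu : cls u = i
      · simp [hu, h]
      · simp [hu]
  rw [Matrix.mul_assoc, h3]
  -- step 4
  have h4 : ((1 : Matrix k k ℝ) -
        Cm * Matrix.diagonal (fun i => (n i : ℝ) * (t + e i)⁻¹)) *
        Matrix.diagonal (fun i => t + e i) = t • (1 : Matrix k k ℝ) - N := by
    ext i j
    simp only [Matrix.mul_diagonal, Matrix.sub_apply, Matrix.smul_apply, smul_eq_mul, hN,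
      Matrix.of_apply]
    by_cases h : i = j
    · subst h
      rw [if_pos rfl, hdiag, Matrix.one_apply_eq]
      have hinv : (t + e i)⁻¹ * (t + e i) = 1 := inv_mul_cancel₀ (hf i)
      have hx : (1 - e i * (↑(n i) * (t + e i)⁻¹)) * (t + e i)
          = (t + e i) - e i * ↑(n i) * ((t + e i)⁻¹ * (t + e i)) := by ring
      rw [hx, hinv]
      ring
    · rw [if_neg h, Matrix.one_apply_ne h]
      field_simp [hf j]
      ring
  have h5 : ((1 : Matrix k k ℝ) -
        Cm * Matrix.diagonal (fun i => (n i : ℝ) * (t + e i)⁻¹)).det * ∏ i, (t + e i) =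
      (t • (1 : Matrix k k ℝ) - N).det := by
    rw [← h4, Matrix.det_mul, Matrix.det_diagonal]
  have h6 : (Matrix.diagonal g).det = ∏ i, (t + e i) ^ (n i) := by
    rw [Matrix.det_diagonal]
    rw [← Finset.prod_fiberwise Finset.univ cls g]
    refine Finset.prod_congr rfl fun i _ => ?_
    have hcong : ∀ u ∈ Finset.univ.filter fun v => cls v = i, g u = t + e i := by
      intro u hu
      simp only [Finset.mem_filter] at hu
      rw [hg]
      simp [hu.2]
    rw [Finset.prod_congr rfl hcong, Finset.prod_const]
  have hs' : ∀ i, 1 ≤ n i := hsurj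
  have h7 : ∀ i, (t + e i) ^ (n i) = (t + e i) ^ (n i - 1) * (t + e i) := by
    intro i
    conv_lhs => rw [← Nat.sub_add_cancel (hs' i)]
    rw [pow_succ]
  rw [h6, Finset.prod_congr rfl (fun i _ => h7 i), Finset.prod_mul_distrib]
  rw [mul_comm ((t • (1:Matrix k k ℝ) - N).det) _, ← h5]
  ring

theorem stmt0 {V : Type*} [Fintype V] [DecidableEq V] (G : SimpleGraph V)
    (hconn : G.Connected) (r : V → V → Prop) (hr : Equivalence r)
    (k : ℕ) (Cl : Fin k → Finset V)
    (hne : ∀ i, (Cl i).Nonempty)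
    (hpart : ∀ v : V, ∃! i, v ∈ Cl i)
    (hclass : ∀ i, ∀ x ∈ Cl i, ∀ y : V, y ∈ Cl i ↔ r x y) :
    (∀ i, ∀ x ∈ Cl i, ∀ y ∈ Cl i,
        sdeg (superGraph G r hr) x = sdeg (superGraph G r hr) y) ∧
    (∀ d : Fin k → ℕ, (∀ i, ∀ x ∈ Cl i, sdeg (superGraph G r hr) x = d i) →
      somborCharpoly (superGraph G r hr) =
        (Matrix.of fun i j : Fin k =>
            if i = j then (((Cl i).card : ℝ) - 1) * (d i : ℝ) * rt2
            else if ∃ x ∈ Cl i, ∃ y ∈ Cl j, (superGraph G r hr).Adj x y then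
              ((Cl j).card : ℝ) * Real.sqrt ((d i : ℝ) ^ 2 + (d j : ℝ) ^ 2)
            else 0).charpoly *
        ∏ i, (X + C ((d i : ℝ) * rt2)) ^ ((Cl i).card - 1)) := by
  set H := superGraph G r hr with hH
  -- basic facts about classes
  have hrsame : ∀ i, ∀ x ∈ Cl i, ∀ y ∈ Cl i, r x y := fun i x hx y hy =>
    (hclass i x hx y).mp hy
  -- adjacency transfer
  have hcongr : ∀ {x y x' y' : V}, H.Adj x y → r x x' → r y y' → x' ≠ y' → H.Adj x' y' := by
    rintro x y x' y' ⟨hne', h | ⟨a, b, hxa, hyb, hab⟩⟩ hx hy hne''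
    · exact ⟨hne'', Or.inl (hr.trans (hr.trans (hr.symm hx) h) hy)⟩
    · exact ⟨hne'', Or.inr ⟨a, b, hr.trans (hr.symm hx) hxa, hr.trans (hr.symm hy) hyb, hab⟩⟩
  have parta : ∀ i, ∀ x ∈ Cl i, ∀ y ∈ Cl i, sdeg H x = sdeg H y := by
    intro i x hx y hy
    by_cases hxy : x = y
    · rw [hxy]
    have hrxy : r x y := hrsame i x hx y hy
    have himg : (Equiv.swap x y) '' {u | H.Adj x u} = {u | H.Adj y u} := by
      rw [Equiv.image_eq_preimage_symm]
      ext u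
      simp only [Set.mem_preimage, Set.mem_setOf_eq, Equiv.symm_swap]
      by_cases hu1 : u = x
      · subst hu1
        rw [Equiv.swap_apply_left]
        exact ⟨fun h => h.symm, fun h => h.symm⟩
      by_cases hu2 : u = y
      · subst hu2
        rw [Equiv.swap_apply_right]
        simp
      · rw [Equiv.swap_apply_of_ne_of_ne hu1 hu2]
        exact ⟨fun h => hcongr h hrxy (hr.refl u) (Ne.symm hu2),
          fun h => hcongr h (hr.symm hrxy) (hr.refl u) (Ne.symm hu1)⟩
    unfold sdeg
    rw [← himg, Set.ncard_image_of_injective _ (Equiv.injective _)]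
  refine ⟨parta, ?_⟩
  intro d hd
  -- the class function
  obtain ⟨cls, hclsmem, hclsu⟩ : ∃ cls : V → Fin k,
      (∀ v, v ∈ Cl (cls v)) ∧ (∀ v i, v ∈ Cl i → cls v = i) :=
    ⟨fun v => (hpart v).choose, fun v => (hpart v).choose_spec.1,
      fun v i h => (hpart v).unique ((hpart v).choose_spec.1) h⟩
  have hcard : ∀ i, Cl i = Finset.univ.filter fun v => cls v = i := by
    intro i
    ext v
    simp only [Finset.mem_filter, Finset.mem_univ, true_and]
    exact ⟨fun h => hclsu v i h, fun h => h ▸ hclsmem v⟩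
  set e : Fin k → ℝ := fun i => (d i : ℝ) * rt2 with he
  set Cm : Matrix (Fin k) (Fin k) ℝ := Matrix.of (fun i j =>
    if i = j then e i
    else if ∃ x ∈ Cl i, ∃ y ∈ Cl j, H.Adj x y then
      Real.sqrt ((d i : ℝ) ^ 2 + (d j : ℝ) ^ 2) else 0) with hCm
  have hSeq : somborMatrix H = Matrix.of (fun u v => if u = v then 0 else Cm (cls u) (cls v)) := by
    ext u v
    simp only [somborMatrix, Matrix.of_apply]
    by_cases huv : u = v
    · subst huv
      rw [if_pos rfl, if_neg (H.irrefl)]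
    · rw [if_neg huv]
      rw [hd (cls u) u (hclsmem u), hd (cls v) v (hclsmem v), hCm]
      by_cases hc : cls u = cls v
      · have hadj : H.Adj u v :=
          ⟨huv, Or.inl (hrsame (cls u) u (hclsmem u) v (hc ▸ hclsmem v))⟩
        rw [if_pos hadj, Matrix.of_apply, hc, if_pos rfl, he]
        have h2d : ((d (cls v) : ℝ)) ^ 2 + ((d (cls v) : ℝ)) ^ 2 = 2 * ((d (cls v) : ℝ)) ^ 2 := by
          ring
        rw [h2d, Real.sqrt_mul (by norm_num : (0:ℝ) ≤ 2),
          Real.sqrt_sq (Nat.cast_nonneg _), rt2]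
        ring
      · have hiff : H.Adj u v ↔ ∃ x ∈ Cl (cls u), ∃ y ∈ Cl (cls v), H.Adj x y := by
          constructor
          · intro h
            exact ⟨u, hclsmem u, v, hclsmem v, h⟩
          · rintro ⟨x, hx, y, hy, hxy⟩
            exact hcongr hxy (hrsame _ x hx u (hclsmem u)) (hrsame _ y hy v (hclsmem v)) huv
        rw [Matrix.of_apply, if_neg hc]
        exact if_congr hiff rfl rfl
  have hsurj : ∀ i, 1 ≤ (Finset.univ.filter fun v => cls v = i).card := by
    intro i
    rw [← hcard]
    exact (hne i).card_pos
  have hNeq : (Matrix.of fun i j : Fin k =>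
      if i = j then (((Cl i).card : ℝ) - 1) * (d i : ℝ) * rt2
      else if ∃ x ∈ Cl i, ∃ y ∈ Cl j, H.Adj x y then
        ((Cl j).card : ℝ) * Real.sqrt ((d i : ℝ) ^ 2 + (d j : ℝ) ^ 2)
      else 0) =
      Matrix.of (fun i j =>
        if i = j then (((Finset.univ.filter fun v => cls v = i).card : ℝ) - 1) * e i
        else ((Finset.univ.filter fun v => cls v = j).card : ℝ) * Cm i j) := by
    ext i j
    simp only [Matrix.of_apply]
    by_cases h : i = j
    · subst h
      rw [if_pos rfl, if_pos rfl, ← hcard, he]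
      ring
    · rw [if_neg h, if_neg h, hCm, Matrix.of_apply, if_neg h, ← hcard, mul_ite, mul_zero]
  apply Polynomial.eq_of_infinite_eval_eq
  apply Set.Infinite.mono (s := Set.Ioi (0:ℝ)) ?_ (Set.Ioi_infinite 0)
  intro t ht
  simp only [Set.mem_setOf_eq]
  have htpos : (0:ℝ) < t := ht
  have hf : ∀ i, t + e i ≠ 0 := by
    intro i
    have : (0:ℝ) ≤ e i := by
      rw [he]
      exact mul_nonneg (Nat.cast_nonneg _) (Real.sqrt_nonneg _)
    linarith
  rw [somborCharpoly, my_eval_charpoly, hSeq,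
    det_factor cls e t hf Cm (fun i => by rw [hCm]; simp) hsurj,
    Polynomial.eval_mul, my_eval_charpoly, hNeq, Polynomial.eval_prod]
  congr 1
  apply Finset.prod_congr rfl
  intro i _
  rw [Polynomial.eval_pow, Polynomial.eval_add, Polynomial.eval_X, Polynomial.eval_C, hcard i, he]
end

section
/- Let k ≥ 2 and n_1, …, n_k ≥ 1 with n = n_1 + … + n_k, and let Γ be the generalized join K_{1,k−1}[K_{n_1}, K_{n_2}, …, K_{n_k}]: its vertex set is the disjoint union of sets V_1, …, V_k with |V_i| = n_i, any two distinct vertices inside the same V_i are adjacent, every vertex of V_1 is adjacent to every vertex of V_j for each j ≥ 2, and there are no other edges. Set d_1 = n − 1 and d_i = n_1 + n_i − 1 for 2 ≤ i ≤ k. Then the Sombor characteristic polynomial of Γ equals ∏_{i=1}^{k} (x + √2·d_i)^{ n_i − 1 } · [ ∏_{i=1}^{k} (x − (n_i − 1)·√2·d_i) − Σ_{j=2}^{k} n_1·n_j·(d_1² + d_j²) · ∏_{i ∉ {1,j}} (x − (n_i − 1)·√2·d_i) ]. -/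
open Polynomial
open scoped Classical

/-- The generalized join `K_{1,k-1}[K_{nn 0}, …, K_{nn (k-1)}]`: block `i` is a clique of
size `nn i`, and every vertex of block `0` is adjacent to every other vertex. -/
def joinGraph (k : ℕ) (nn : Fin k → ℕ) : SimpleGraph (Σ i : Fin k, Fin (nn i)) where
  Adj x y := x ≠ y ∧ (x.1 = y.1 ∨ x.1.val = 0 ∨ y.1.val = 0)
  symm := by
    constructor
    rintro x y ⟨h, c | c | c⟩
    · exact ⟨h.symm, Or.inl c.symm⟩
    · exact ⟨h.symm, Or.inr (Or.inr c)⟩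
    · exact ⟨h.symm, Or.inr (Or.inl c)⟩
  loopless := by constructor; rintro x ⟨h, -⟩; exact h rfl

lemma arrow_det {R : Type*} [CommRing R] {ι : Type*} [Fintype ι] [DecidableEq ι]
    (i0 : ι) (A : Matrix ι ι R)
    (h : ∀ i j, i ≠ j → i ≠ i0 → j ≠ i0 → A i j = 0) :
    A.det = ∏ i, A i i -
      ∑ j ∈ Finset.univ \ {i0}, A i0 j * A j i0 * ∏ i ∈ Finset.univ \ {i0, j}, A i i := by
  classical
  rw [Matrix.det_apply]
  set T : Finset (Equiv.Perm ι) :=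
    insert 1 ((Finset.univ \ {i0}).image fun j => Equiv.swap i0 j) with hT
  have hzero : ∀ σ ∈ (Finset.univ : Finset (Equiv.Perm ι)), σ ∉ T →
      (Equiv.Perm.sign σ : ℤˣ) • ∏ i, A (σ i) i = 0 := by
    intro σ _ hσ
    have hex : ∃ i, σ i ≠ i ∧ σ i ≠ i0 ∧ i ≠ i0 := by
      by_contra hcon
      push_neg at hcon
      have key : ∀ i, i ≠ i0 → σ i = i ∨ σ i = i0 := by
        intro i hi
        by_cases h1 : σ i = i
        · exact Or.inl h1
        by_cases h2 : σ i = i0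
        · exact Or.inr h2
        exact absurd (hcon i h1 h2) hi
      by_cases hex2 : ∃ j, j ≠ i0 ∧ σ j ≠ j
      · obtain ⟨j, hj0, hjne⟩ := hex2
        have hji0 : σ j = i0 := (key j hj0).resolve_left hjne
        have hfix2 : ∀ i, i ≠ i0 → i ≠ j → σ i = i := by
          intro i h1 h2
          refine (key i h1).resolve_right fun h' => h2 (σ.injective (h'.trans hji0.symm))
        have hmj : σ i0 = j := by
          by_contra hm
          have hm0 : σ i0 ≠ i0 := fun h' =>
            hj0 (σ.injective (hji0.trans h'.symm) : j = i0)
          have := hfix2 (σ i0) hm0 hm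
          exact hm0 (σ.injective this)
        have hσswap : σ = Equiv.swap i0 j := by
          ext i
          rcases eq_or_ne i i0 with rfl | h1
          · rw [hmj, Equiv.swap_apply_left]
          rcases eq_or_ne i j with rfl | h2
          · rw [hji0, Equiv.swap_apply_right]
          · rw [hfix2 i h1 h2, Equiv.swap_apply_of_ne_of_ne h1 h2]
        refine hσ ?_
        rw [hT]
        refine Finset.mem_insert_of_mem ?_
        exact Finset.mem_image.2 ⟨j, by simp [hj0], hσswap.symm⟩
      · push_neg at hex2
        have hσ1 : σ = 1 := by
          ext i
          rcases ne_or_eq i i0 with hi | rfl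
          · exact hex2 i hi
          · by_contra hne
            have hne' : σ i ≠ i := hne
            have hj0 : σ i ≠ i := hne'
            have hji : σ (σ i) = σ i := hex2 (σ i) hne'
            exact hj0 (σ.injective hji)
        exact hσ (by rw [hσ1, hT]; exact Finset.mem_insert_self 1 _)
    obtain ⟨i, h1, h2, h3⟩ := hex
    have hp : ∏ i, A (σ i) i = 0 :=
      Finset.prod_eq_zero (Finset.mem_univ i) (h _ _ h1 h2 h3)
    rw [hp, smul_zero]
  rw [← Finset.sum_subset (Finset.subset_univ T) hzero]
  have h1T : (1 : Equiv.Perm ι) ∉ (Finset.univ \ {i0}).image fun j => Equiv.swap i0 j := by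
    simp only [Finset.mem_image, Finset.mem_sdiff, Finset.mem_singleton]
    rintro ⟨j, ⟨-, hj⟩, hswap⟩
    have := congrArg (fun e => e i0) hswap
    simp [Equiv.swap_apply_left] at this
    exact hj this
  rw [hT, Finset.sum_insert h1T]
  have hinj : ∀ a ∈ Finset.univ \ {i0}, ∀ b ∈ Finset.univ \ {i0},
      Equiv.swap i0 a = Equiv.swap i0 b → a = b := by
    intro a ha b hb hab
    have := congrArg (fun e => e i0) hab
    simpa [Equiv.swap_apply_left] using this
  rw [Finset.sum_image hinj]
  have hid : (Equiv.Perm.sign (1 : Equiv.Perm ι) : ℤˣ) • ∏ i, A ((1 : Equiv.Perm ι) i) i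
      = ∏ i, A i i := by simp
  rw [hid, sub_eq_add_neg, ← Finset.sum_neg_distrib]
  congr 1
  refine Finset.sum_congr rfl fun j hj => ?_
  have hj0 : j ≠ i0 := by simpa using (Finset.mem_sdiff.1 hj).2
  have hsign : Equiv.Perm.sign (Equiv.swap i0 j) = -1 := Equiv.Perm.sign_swap (Ne.symm hj0)
  have hprod : ∏ i, A (Equiv.swap i0 j i) i
      = A i0 j * A j i0 * ∏ i ∈ Finset.univ \ {i0, j}, A i i := by
    have hsub : ({i0, j} : Finset ι) ⊆ Finset.univ := Finset.subset_univ _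
    rw [← Finset.prod_sdiff hsub]
    have hpair : ∏ i ∈ ({i0, j} : Finset ι), A (Equiv.swap i0 j i) i
        = A j i0 * A i0 j := by
      rw [Finset.prod_pair (Ne.symm hj0)]
      rw [Equiv.swap_apply_left, Equiv.swap_apply_right]
    have hrest : ∏ i ∈ Finset.univ \ ({i0, j} : Finset ι), A (Equiv.swap i0 j i) i
        = ∏ i ∈ Finset.univ \ {i0, j}, A i i := by
      refine Finset.prod_congr rfl fun i hi => ?_
      simp only [Finset.mem_sdiff, Finset.mem_insert, Finset.mem_singleton] at hi
      rw [Equiv.swap_apply_of_ne_of_ne (fun h => hi.2 (Or.inl h)) (fun h => hi.2 (Or.inr h))]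
    rw [hpair, hrest]
    ring
  rw [hsign, hprod]
  simp [Units.neg_smul]


namespace BU

variable {R : Type*} [CommRing R] {k : ℕ}

lemma sig_ne {nn : Fin k → ℕ} {i j : Fin k} (h : i ≠ j)
    (a : Fin (nn i)) (c : Fin (nn j)) : (⟨i,a⟩ : Σ i, Fin (nn i)) ≠ ⟨j,c⟩ := by
  simp [Sigma.ext_iff, h]

lemma sig_eq_iff {nn : Fin k → ℕ} {i : Fin k} (a c : Fin (nn i)) :
    (⟨i,a⟩ : Σ i, Fin (nn i)) = ⟨i,c⟩ ↔ a = c := by simp [Sigma.ext_iff]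

variable (nn : Fin k → ℕ) (x y : Fin k → R) (z : Fin k → Fin k → R)

def bb (hnn : ∀ i, 1 ≤ nn i) (i : Fin k) : Σ i, Fin (nn i) := ⟨i, ⟨0, hnn i⟩⟩

lemma eq_bb_iff (hnn : ∀ i, 1 ≤ nn i) {i : Fin k} (a : Fin (nn i)) :
    (⟨i,a⟩ : Σ i, Fin (nn i)) = bb nn hnn i ↔ a.val = 0 := by
  unfold bb
  rw [sig_eq_iff]
  exact ⟨fun h => by rw [h], fun h => Fin.ext h⟩

lemma eq_bb_iff' (hnn : ∀ i, 1 ≤ nn i) (u : Σ i, Fin (nn i)) : u = bb nn hnn u.1 ↔ u.2.val = 0 := by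
  obtain ⟨i, a⟩ := u
  exact eq_bb_iff nn hnn a

lemma bb_ne (hnn : ∀ i, 1 ≤ nn i) {i : Fin k} (a : Fin (nn i)) (ha : a.val ≠ 0) :
    (⟨i,a⟩ : Σ i, Fin (nn i)) ≠ bb nn hnn i :=
  fun h => ha ((eq_bb_iff nn hnn a).1 h)

def MM : Matrix (Σ i : Fin k, Fin (nn i)) (Σ i : Fin k, Fin (nn i)) R :=
  Matrix.of fun u v => if u = v then x u.1 else if u.1 = v.1 then y u.1 else z u.1 v.1

lemma MM_same {i : Fin k} (a c : Fin (nn i)) :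
    MM nn x y z ⟨i,a⟩ ⟨i,c⟩ = if a = c then x i else y i := by
  unfold MM
  by_cases h : a = c
  · subst h; simp
  · rw [Matrix.of_apply, if_neg (by rw [sig_eq_iff]; exact h), if_pos rfl, if_neg h]

lemma MM_diff {i j : Fin k} (h : i ≠ j) (a : Fin (nn i)) (c : Fin (nn j)) :
    MM nn x y z ⟨i,a⟩ ⟨j,c⟩ = z i j := by
  unfold MM
  rw [Matrix.of_apply, if_neg (sig_ne h a c), if_neg h]

lemma MM_rowsum (hnn : ∀ i, 1 ≤ nn i) (u : Σ i : Fin k, Fin (nn i)) (j : Fin k) :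
    ∑ a : Fin (nn j), MM nn x y z u ⟨j, a⟩ =
      if u.1 = j then x j + ((nn j - 1 : ℕ) : R) * y j else ((nn j : ℕ) : R) * z u.1 j := by
  obtain ⟨i, aa⟩ := u
  by_cases hij : i = j
  · subst hij
    rw [if_pos rfl]
    have hterm : ∀ a : Fin (nn i), MM nn x y z ⟨i, aa⟩ ⟨i, a⟩ =
        (if a = aa then x i - y i else 0) + y i := by
      intro a
      rw [MM_same]
      by_cases h : a = aa
      · subst h; rw [if_pos rfl, if_pos rfl, sub_add_cancel]
      · rw [if_neg (fun hh => h hh.symm), if_neg h, zero_add]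
    rw [Finset.sum_congr rfl fun a _ => hterm a, Finset.sum_add_distrib,
      Finset.sum_ite_eq' Finset.univ aa, if_pos (Finset.mem_univ _),
      Finset.sum_const, Finset.card_univ, Fintype.card_fin, nsmul_eq_mul,
      Nat.cast_sub (hnn i)]
    ring
  · rw [if_neg hij, Finset.sum_congr rfl fun a _ => MM_diff nn x y z hij aa a,
      Finset.sum_const, Finset.card_univ, Fintype.card_fin, nsmul_eq_mul]

def NN (hnn : ∀ i, 1 ≤ nn i) : Matrix (Σ i : Fin k, Fin (nn i)) (Σ i : Fin k, Fin (nn i)) R :=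
  Matrix.of fun u w => if u.2.val ≠ 0 ∧ w = bb nn hnn u.1 then 1 else 0

def FF (hnn : ∀ i, 1 ≤ nn i) : Matrix (Σ i : Fin k, Fin (nn i)) (Σ i : Fin k, Fin (nn i)) R :=
  Matrix.of fun u c =>
    if u.2.val ≠ 0 then
      (if c = u then x u.1 - y u.1 else if c = bb nn hnn u.1 then y u.1 - x u.1 else 0)
    else MM nn x y z u c

def EE (hnn : ∀ i, 1 ≤ nn i) : Matrix (Σ i : Fin k, Fin (nn i)) (Σ i : Fin k, Fin (nn i)) R :=
  Matrix.of fun u c =>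
    if u.2.val ≠ 0 then (if c = u then x u.1 - y u.1 else 0)
    else if c.2.val ≠ 0 then (if u.1 = c.1 then y u.1 else z u.1 c.1)
    else if u.1 = c.1 then x u.1 + ((nn u.1 - 1 : ℕ) : R) * y u.1
      else ((nn c.1 : ℕ) : R) * z u.1 c.1

lemma NN_sq (hnn : ∀ i, 1 ≤ nn i) :
    (NN nn hnn : Matrix _ _ R) * NN nn hnn = 0 := by
  ext u c
  rw [Matrix.mul_apply, Matrix.zero_apply]
  refine Finset.sum_eq_zero fun w _ => ?_
  by_cases h1 : u.2.val ≠ 0 ∧ w = bb nn hnn u.1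
  · obtain ⟨h1a, rfl⟩ := h1
    have h2 : (NN nn hnn : Matrix _ _ R) (bb nn hnn u.1) c = 0 := by
      unfold NN
      rw [Matrix.of_apply, if_neg]
      rintro ⟨hh, -⟩
      exact hh rfl
    rw [h2, mul_zero]
  · have h2 : (NN nn hnn : Matrix _ _ R) u w = 0 := by
      unfold NN; rw [Matrix.of_apply, if_neg h1]
    rw [h2, zero_mul]

lemma step1 (hnn : ∀ i, 1 ≤ nn i) :
    (1 - NN nn hnn) * MM nn x y z = FF nn x y z hnn := by
  have hNM : ∀ u c, ((NN nn hnn : Matrix _ _ R) * MM nn x y z) u c =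
      if u.2.val ≠ 0 then MM nn x y z (bb nn hnn u.1) c else 0 := by
    intro u c
    rw [Matrix.mul_apply]
    by_cases h : u.2.val = 0
    · rw [if_neg (not_not_intro h)]
      refine Finset.sum_eq_zero fun w _ => ?_
      have : (NN nn hnn : Matrix _ _ R) u w = 0 := by
        unfold NN; rw [Matrix.of_apply, if_neg (by rintro ⟨hh, -⟩; exact hh h)]
      rw [this, zero_mul]
    · rw [if_pos h]
      have hterm : ∀ w, (NN nn hnn : Matrix _ _ R) u w * MM nn x y z w c =
          if w = bb nn hnn u.1 then MM nn x y z w c else 0 := by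
        intro w
        unfold NN
        by_cases hw : w = bb nn hnn u.1
        · rw [Matrix.of_apply, if_pos ⟨h, hw⟩, if_pos hw, one_mul]
        · rw [Matrix.of_apply, if_neg (by rintro ⟨-, hh⟩; exact hw hh), if_neg hw, zero_mul]
      rw [Finset.sum_congr rfl fun w _ => hterm w,
        Finset.sum_ite_eq' Finset.univ (bb nn hnn u.1) fun w => MM nn x y z w c,
        if_pos (Finset.mem_univ _)]
  ext u c
  rw [Matrix.sub_mul, Matrix.one_mul, Matrix.sub_apply, hNM]
  by_cases h : u.2.val = 0
  · rw [if_neg (not_not_intro h), sub_zero]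
    unfold FF
    rw [Matrix.of_apply, if_neg (not_not_intro h)]
  · rw [if_pos h]
    obtain ⟨i, a⟩ := u
    unfold FF
    rw [Matrix.of_apply, if_pos h]
    obtain ⟨j, cc⟩ := c
    have hbfst : (bb nn hnn (⟨i, a⟩ : Σ i, Fin (nn i)).1) = ⟨i, ⟨0, hnn i⟩⟩ := rfl
    rw [hbfst]
    by_cases hij : j = i
    · subst hij
      rw [MM_same, MM_same]
      by_cases hca : cc = a
      · subst hca
        rw [if_pos rfl, if_pos rfl,
          if_neg (fun hh : (⟨0, hnn j⟩ : Fin (nn j)) = cc => h (by rw [← hh]))]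
      · rw [if_neg (fun hh => hca hh.symm),
          if_neg (fun hh : (⟨j, cc⟩ : Σ i, Fin (nn i)) = ⟨j, a⟩ =>
            hca ((sig_eq_iff cc a).1 hh))]
        by_cases hc0 : cc.val = 0
        · rw [if_pos ((sig_eq_iff cc (⟨0, hnn j⟩ : Fin (nn j))).2 (Fin.ext hc0)),
            if_pos (Fin.ext hc0).symm]
        · rw [if_neg (fun hh : (⟨j, cc⟩ : Σ i, Fin (nn i)) = ⟨j, ⟨0, hnn j⟩⟩ =>
            hc0 (by rw [(sig_eq_iff cc _).1 hh])),
            if_neg (fun hh : (⟨0, hnn j⟩ : Fin (nn j)) = cc => hc0 (by rw [← hh])),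
            sub_self]
    · rw [MM_diff nn x y z (fun hh => hij hh.symm), MM_diff nn x y z (fun hh => hij hh.symm),
        sub_self, if_neg (sig_ne hij cc a),
        if_neg (fun hh : (⟨j, cc⟩ : Σ i, Fin (nn i)) = ⟨i, ⟨0, hnn i⟩⟩ => hij (by
          rw [Sigma.ext_iff] at hh; exact hh.1))]

lemma FN_apply (hnn : ∀ i, 1 ≤ nn i) (u c : Σ i : Fin k, Fin (nn i)) :
    ((FF nn x y z hnn * NN nn hnn : Matrix _ _ R)) u c =
      if c.2.val = 0 then
        ∑ a ∈ Finset.univ.erase (⟨0, hnn c.1⟩ : Fin (nn c.1)), FF nn x y z hnn u ⟨c.1, a⟩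
      else 0 := by
  rw [Matrix.mul_apply, ← Finset.univ_sigma_univ, Finset.sum_sigma]
  obtain ⟨jc, c2⟩ := c
  by_cases hc : c2.val = 0
  · rw [if_pos hc]
    have hcb : (⟨jc, c2⟩ : Σ i, Fin (nn i)) = bb nn hnn jc := (eq_bb_iff nn hnn c2).2 hc
    rw [Finset.sum_eq_single jc]
    · have hterm : ∀ a : Fin (nn jc), FF nn x y z hnn u ⟨jc, a⟩ * NN nn hnn ⟨jc, a⟩ ⟨jc, c2⟩ =
          if a ∈ Finset.univ.erase (⟨0, hnn jc⟩ : Fin (nn jc)) then FF nn x y z hnn u ⟨jc, a⟩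
          else 0 := by
        intro a
        by_cases ha : a.val = 0
        · have h1 : (NN nn hnn : Matrix _ _ R) ⟨jc, a⟩ ⟨jc, c2⟩ = 0 := by
            unfold NN
            rw [Matrix.of_apply, if_neg (by rintro ⟨hh, -⟩; exact hh ha)]
          rw [h1, mul_zero, if_neg (fun hmem => (Finset.mem_erase.1 hmem).1 (Fin.ext ha))]
        · have hmem : a ∈ Finset.univ.erase (⟨0, hnn jc⟩ : Fin (nn jc)) := by
            rw [Finset.mem_erase]
            exact ⟨fun hh => ha (by rw [hh]), Finset.mem_univ _⟩
          rw [if_pos hmem]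
          have h1 : (NN nn hnn : Matrix _ _ R) ⟨jc, a⟩ ⟨jc, c2⟩ = 1 := by
            unfold NN
            rw [Matrix.of_apply, if_pos ⟨ha, hcb⟩]
          rw [h1, mul_one]
      rw [Finset.sum_congr rfl fun a _ => hterm a, Finset.sum_ite_mem, Finset.univ_inter]
    · intro j _ hj
      refine Finset.sum_eq_zero fun a _ => ?_
      have h1 : (NN nn hnn : Matrix _ _ R) ⟨j, a⟩ ⟨jc, c2⟩ = 0 := by
        unfold NN
        rw [Matrix.of_apply, if_neg]
        rintro ⟨-, hh⟩
        exact sig_ne (Ne.symm hj) c2 (⟨0, hnn j⟩ : Fin (nn j)) hh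
      rw [h1, mul_zero]
    · intro hj; exact absurd (Finset.mem_univ jc) hj
  · rw [if_neg hc]
    refine Finset.sum_eq_zero fun j _ => Finset.sum_eq_zero fun a _ => ?_
    have h1 : (NN nn hnn : Matrix _ _ R) ⟨j, a⟩ ⟨jc, c2⟩ = 0 := by
      unfold NN
      rw [Matrix.of_apply, if_neg]
      rintro ⟨-, hh⟩
      rw [Sigma.ext_iff] at hh
      obtain ⟨rfl, hh2⟩ := hh
      exact hc (congrArg Fin.val (eq_of_heq hh2))
    rw [h1, mul_zero]

lemma step2 (hnn : ∀ i, 1 ≤ nn i) :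
    FF nn x y z hnn * (1 + NN nn hnn) = EE nn x y z hnn := by
  ext u c
  rw [Matrix.mul_add, Matrix.mul_one, Matrix.add_apply, FN_apply]
  obtain ⟨jc, c2⟩ := c
  by_cases hc : c2.val = 0
  · rw [if_pos hc]
    have hc20 : c2 = (⟨0, hnn jc⟩ : Fin (nn jc)) := Fin.ext hc
    have hsum : FF nn x y z hnn u ⟨jc, c2⟩ +
        ∑ a ∈ Finset.univ.erase (⟨0, hnn jc⟩ : Fin (nn jc)), FF nn x y z hnn u ⟨jc, a⟩ =
        ∑ a : Fin (nn jc), FF nn x y z hnn u ⟨jc, a⟩ := by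
      rw [hc20]
      exact Finset.add_sum_erase Finset.univ (fun a => FF nn x y z hnn u ⟨jc, a⟩)
        (Finset.mem_univ (⟨0, hnn jc⟩ : Fin (nn jc)))
    rw [hsum]
    obtain ⟨i, aa⟩ := u
    by_cases hu : aa.val = 0
    · have hFM : ∀ a : Fin (nn jc), FF nn x y z hnn ⟨i, aa⟩ ⟨jc, a⟩ =
          MM nn x y z ⟨i, aa⟩ ⟨jc, a⟩ := by
        intro a
        unfold FF
        rw [Matrix.of_apply, if_neg (not_not_intro hu)]
      rw [Finset.sum_congr rfl fun a _ => hFM a, MM_rowsum nn x y z hnn ⟨i, aa⟩ jc]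
      unfold EE
      rw [Matrix.of_apply, if_neg (not_not_intro hu), if_neg (not_not_intro hc)]
      rcases eq_or_ne i jc with rfl | hij2
      · rw [if_pos (show (⟨i, aa⟩ : Σ i, Fin (nn i)).1 = i from rfl)]
      · rw [if_neg (hij2 : ¬ (⟨i, aa⟩ : Σ i, Fin (nn i)).1 = jc),
          if_neg (hij2 : ¬ (⟨i, aa⟩ : Σ i, Fin (nn i)).1 = (⟨jc, c2⟩ : Σ i, Fin (nn i)).1)]
    · have hcu : (⟨jc, c2⟩ : Σ i, Fin (nn i)) ≠ ⟨i, aa⟩ := by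
        intro hh
        rw [Sigma.ext_iff] at hh
        obtain ⟨rfl, hh2⟩ := hh
        exact hu (by rw [← congrArg Fin.val (eq_of_heq hh2)]; exact hc)
      have hEval : EE nn x y z hnn ⟨i, aa⟩ ⟨jc, c2⟩ = 0 := by
        unfold EE
        rw [Matrix.of_apply, if_pos hu, if_neg hcu]
      rw [hEval]
      by_cases hij : jc = i
      · subst hij
        have haa0 : aa ≠ (⟨0, hnn jc⟩ : Fin (nn jc)) := fun hh => hu (by rw [hh])
        have hterm : ∀ a : Fin (nn jc), FF nn x y z hnn ⟨jc, aa⟩ ⟨jc, a⟩ =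
            (if a = aa then x jc - y jc else 0) +
            (if a = (⟨0, hnn jc⟩ : Fin (nn jc)) then y jc - x jc else 0) := by
          intro a
          unfold FF
          rw [Matrix.of_apply, if_pos hu]
          by_cases ha : a = aa
          · subst ha
            rw [if_pos ((sig_eq_iff a a).2 rfl), if_pos rfl, if_neg haa0, add_zero]
          · rw [if_neg (fun hh => ha ((sig_eq_iff a aa).1 hh)), if_neg ha, zero_add]
            by_cases ha0 : a = (⟨0, hnn jc⟩ : Fin (nn jc))
            · rw [if_pos ((eq_bb_iff nn hnn a).2 (by rw [ha0])), if_pos ha0]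
            · rw [if_neg (fun hh => ha0 (show a = (⟨0, hnn jc⟩ : Fin (nn jc)) from
                Fin.ext ((eq_bb_iff nn hnn a).1 hh))), if_neg ha0]
        rw [Finset.sum_congr rfl fun a _ => hterm a, Finset.sum_add_distrib,
          Finset.sum_ite_eq' Finset.univ aa, Finset.sum_ite_eq' Finset.univ,
          if_pos (Finset.mem_univ _), if_pos (Finset.mem_univ _)]
        ring
      · refine Finset.sum_eq_zero fun a _ => ?_
        unfold FF
        rw [Matrix.of_apply, if_pos hu,
          if_neg (sig_ne (fun hh : jc = i => hij hh) a aa),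
          if_neg (show (⟨jc, a⟩ : Σ i, Fin (nn i)) ≠ bb nn hnn i from
            sig_ne (fun hh : jc = i => hij hh) a (⟨0, hnn i⟩ : Fin (nn i)))]
  · rw [if_neg hc, add_zero]
    obtain ⟨i, aa⟩ := u
    by_cases hu : aa.val = 0
    · unfold FF EE
      rw [Matrix.of_apply, Matrix.of_apply, if_neg (not_not_intro hu),
        if_neg (not_not_intro hu), if_pos hc]
      by_cases hij : i = jc
      · subst hij
        rw [MM_same, if_neg (fun hh : aa = c2 => hc (by rw [← hh]; exact hu)), if_pos rfl]
      · rw [MM_diff nn x y z hij, if_neg hij]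
    · unfold FF EE
      rw [Matrix.of_apply, Matrix.of_apply, if_pos hu, if_pos hu]
      by_cases hcu : (⟨jc, c2⟩ : Σ i, Fin (nn i)) = ⟨i, aa⟩
      · rw [if_pos hcu, if_pos hcu]
      · rw [if_neg hcu, if_neg hcu, if_neg (show (⟨jc, c2⟩ : Σ i, Fin (nn i)) ≠ bb nn hnn i from
          fun hh => ?_)]
        rw [Sigma.ext_iff] at hh
        obtain ⟨rfl, hh2⟩ := hh
        exact hc (congrArg Fin.val (eq_of_heq hh2))

lemma card_nonzero (m : ℕ) (hm : 1 ≤ m) :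
    Fintype.card {a : Fin m // a.val ≠ 0} = m - 1 := by
  have h1 : Fintype.card {a : Fin m // a.val = 0} = 1 := by
    rw [Fintype.card_eq_one_iff]
    refine ⟨⟨⟨0, hm⟩, rfl⟩, ?_⟩
    rintro ⟨a, ha⟩
    exact Subtype.ext (Fin.ext ha)
  have h2 := Fintype.card_subtype_compl (fun a : Fin m => a.val = 0)
  rw [h1, Fintype.card_fin] at h2
  exact h2

lemma blowup_det (hnn : ∀ i, 1 ≤ nn i) :
    (MM nn x y z).det
    = (∏ i, (x i - y i) ^ (nn i - 1)) *
      (Matrix.of fun i j : Fin k =>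
        if i = j then x i + ((nn i - 1 : ℕ) : R) * y i
        else ((nn j : ℕ) : R) * z i j).det := by
  classical
  set One : Matrix (Σ i : Fin k, Fin (nn i)) (Σ i : Fin k, Fin (nn i)) R := 1 with hOne
  have hunit : (One - NN nn hnn) * (One + NN nn hnn) = One := by
    have h1 : (One - NN nn hnn) * (One + NN nn hnn) =
        One * One + One * NN nn hnn - NN nn hnn * One - NN nn hnn * NN nn hnn := by
      rw [hOne]; noncomm_ring
    rw [h1, NN_sq, hOne]
    simp
  have hdetME : (MM nn x y z).det = (EE nn x y z hnn).det := by
    have hE' : EE nn x y z hnn = (One - NN nn hnn) * MM nn x y z * (One + NN nn hnn) := by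
      rw [hOne, step1, step2]
    rw [hE', Matrix.det_mul, Matrix.det_mul]
    have h2 : (One - NN nn hnn).det * (One + NN nn hnn).det = 1 := by
      rw [← Matrix.det_mul, hunit, hOne, Matrix.det_one]
    linear_combination (-(MM nn x y z).det) * h2
  rw [hdetME]
  set e : (Σ i : Fin k, Fin (nn i)) ≃ ((Σ i : Fin k, {a : Fin (nn i) // a.val ≠ 0}) ⊕ Fin k) :=
    { toFun := fun u => if h : u.2.val = 0 then Sum.inr u.1 else Sum.inl ⟨u.1, ⟨u.2, h⟩⟩
      invFun := Sum.elim (fun p => ⟨p.1, p.2.1⟩) (bb nn hnn)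
      left_inv := by
        rintro ⟨i, a⟩
        dsimp only
        by_cases h : a.val = 0
        · rw [dif_pos h]
          exact ((eq_bb_iff nn hnn a).2 h).symm
        · rw [dif_neg h]
          rfl
      right_inv := by
        rintro (⟨i, ⟨a, ha⟩⟩ | i)
        · dsimp only [Sum.elim_inl]
          rw [dif_neg ha]
        · dsimp only [Sum.elim_inr]
          rw [dif_pos (show ((bb nn hnn i).snd.val = 0) from rfl)]
          rfl } with he
  rw [← Matrix.det_submatrix_equiv_self e.symm (EE nn x y z hnn)]
  have hsub : (EE nn x y z hnn).submatrix e.symm e.symm =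
      Matrix.fromBlocks
        (Matrix.diagonal fun p : Σ i : Fin k, {a : Fin (nn i) // a.val ≠ 0} => x p.1 - y p.1)
        0
        (Matrix.of fun (i : Fin k) (p : Σ i : Fin k, {a : Fin (nn i) // a.val ≠ 0}) =>
          if i = p.1 then y i else z i p.1)
        (Matrix.of fun i j : Fin k =>
          if i = j then x i + ((nn i - 1 : ℕ) : R) * y i else ((nn j : ℕ) : R) * z i j) := by
    ext u c
    rcases u with p | i <;> rcases c with q | j
    · obtain ⟨pi, pa, hpa⟩ := p
      obtain ⟨qi, qa, hqa⟩ := q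
      have h1 : e.symm (Sum.inl ⟨pi, ⟨pa, hpa⟩⟩) = ⟨pi, pa⟩ := rfl
      have h2 : e.symm (Sum.inl ⟨qi, ⟨qa, hqa⟩⟩) = ⟨qi, qa⟩ := rfl
      rw [Matrix.submatrix_apply, h1, h2, Matrix.fromBlocks_apply₁₁]
      unfold EE
      rw [Matrix.of_apply, if_pos hpa]
      by_cases hpq : (⟨pi, ⟨pa, hpa⟩⟩ : Σ i : Fin k, {a : Fin (nn i) // a.val ≠ 0}) =
          ⟨qi, ⟨qa, hqa⟩⟩
      · rw [Sigma.ext_iff] at hpq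
        obtain ⟨rfl, hpq2⟩ := hpq
        have : pa = qa := congrArg Subtype.val (eq_of_heq hpq2)
        subst this
        rw [if_pos rfl, Matrix.diagonal_apply_eq]
      · rw [Matrix.diagonal_apply_ne _ hpq, if_neg]
        intro hh
        rw [Sigma.ext_iff] at hh
        obtain ⟨rfl, hh2⟩ := hh
        refine hpq ?_
        rw [Sigma.ext_iff]
        exact ⟨rfl, heq_of_eq (Subtype.ext (eq_of_heq hh2).symm)⟩
    · obtain ⟨pi, pa, hpa⟩ := p
      have h1 : e.symm (Sum.inl ⟨pi, ⟨pa, hpa⟩⟩) = ⟨pi, pa⟩ := rfl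
      have h2 : e.symm (Sum.inr j) = bb nn hnn j := rfl
      rw [Matrix.submatrix_apply, h1, h2, Matrix.fromBlocks_apply₁₂]
      unfold EE
      rw [Matrix.of_apply, if_pos hpa, if_neg, Matrix.zero_apply]
      intro hh
      rw [show bb nn hnn j = ⟨j, ⟨0, hnn j⟩⟩ from rfl, Sigma.ext_iff] at hh
      obtain ⟨rfl, hh2⟩ := hh
      exact hpa ((congrArg Fin.val (eq_of_heq hh2)).symm)
    · obtain ⟨qi, qa, hqa⟩ := q
      have h1 : e.symm (Sum.inr i) = bb nn hnn i := rfl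
      have h2 : e.symm (Sum.inl ⟨qi, ⟨qa, hqa⟩⟩) = ⟨qi, qa⟩ := rfl
      rw [Matrix.submatrix_apply, h1, h2, Matrix.fromBlocks_apply₂₁]
      unfold EE
      rw [Matrix.of_apply, if_neg (not_not_intro (show (bb nn hnn i).2.val = 0 from rfl)),
        if_pos (hqa : ((⟨qi, qa⟩ : Σ i, Fin (nn i))).2.val ≠ 0)]
      rfl
    · have h1 : e.symm (Sum.inr i) = bb nn hnn i := rfl
      have h2 : e.symm (Sum.inr j) = bb nn hnn j := rfl
      rw [Matrix.submatrix_apply, h1, h2, Matrix.fromBlocks_apply₂₂]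
      unfold EE
      rw [Matrix.of_apply, if_neg (not_not_intro (show (bb nn hnn i).2.val = 0 from rfl)),
        if_neg (not_not_intro (show (bb nn hnn j).2.val = 0 from rfl))]
      rfl
  rw [hsub, Matrix.det_fromBlocks_zero₁₂, Matrix.det_diagonal]
  congr 1
  rw [← Finset.univ_sigma_univ, Finset.prod_sigma]
  refine Finset.prod_congr rfl fun i _ => ?_
  show ∏ _s : {a : Fin (nn i) // a.val ≠ 0}, (x i - y i) = (x i - y i) ^ (nn i - 1)
  rw [Finset.prod_const, Finset.card_univ, card_nonzero (nn i) (hnn i)]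

end BU

lemma sdeg_join {k : ℕ} [NeZero k] (nn : Fin k → ℕ) (hnn : ∀ i, 1 ≤ nn i)
    (i : Fin k) (a : Fin (nn i)) :
    sdeg (joinGraph k nn) ⟨i, a⟩ =
      (if i = 0 then ∑ j, nn j else nn 0 + nn i) - 1 := by
  classical
  have hcardV : Fintype.card (Σ j : Fin k, Fin (nn j)) = ∑ j, nn j := by
    rw [Fintype.card_sigma]
    exact Finset.sum_congr rfl fun j _ => Fintype.card_fin (nn j)
  rw [sdeg, Set.ncard_eq_toFinset_card', Set.toFinset_setOf]
  by_cases hi : i = 0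
  · subst hi
    rw [if_pos rfl]
    have hfil : (Finset.univ.filter fun u => (joinGraph k nn).Adj ⟨0, a⟩ u) =
        Finset.univ.erase ⟨0, a⟩ := by
      ext u
      simp only [Finset.mem_filter, Finset.mem_univ, true_and, Finset.mem_erase]
      constructor
      · rintro ⟨h1, -⟩; exact ⟨Ne.symm h1, trivial⟩
      · rintro ⟨h1, -⟩
        exact ⟨Ne.symm h1, Or.inr (Or.inl (by simp))⟩
    rw [hfil, Finset.card_erase_of_mem (Finset.mem_univ _), Finset.card_univ, hcardV]
  · rw [if_neg hi]
    have hvi : i.val ≠ 0 := fun h => hi (Fin.ext h)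
    have hfil : (Finset.univ.filter fun u => (joinGraph k nn).Adj ⟨i, a⟩ u) =
        (Finset.univ.filter fun u : Σ j : Fin k, Fin (nn j) =>
          i = u.1 ∨ u.1.val = 0).erase ⟨i, a⟩ := by
      ext u
      simp only [Finset.mem_filter, Finset.mem_univ, true_and, Finset.mem_erase]
      constructor
      · rintro ⟨h1, h2 | h2 | h2⟩
        · exact ⟨Ne.symm h1, Or.inl h2⟩
        · exact absurd h2 hvi
        · exact ⟨Ne.symm h1, Or.inr h2⟩
      · rintro ⟨h1, h2 | h2⟩
        · exact ⟨Ne.symm h1, Or.inl h2⟩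
        · exact ⟨Ne.symm h1, Or.inr (Or.inr h2)⟩
    have hmem : (⟨i, a⟩ : Σ j : Fin k, Fin (nn j)) ∈
        Finset.univ.filter fun u : Σ j : Fin k, Fin (nn j) => i = u.1 ∨ u.1.val = 0 := by
      rw [Finset.mem_filter]
      exact ⟨Finset.mem_univ _, Or.inl rfl⟩
    rw [hfil, Finset.card_erase_of_mem hmem]
    congr 1
    rw [Finset.card_filter, ← Finset.univ_sigma_univ, Finset.sum_sigma]
    have hinner : ∀ j : Fin k, (∑ b : Fin (nn j),
        if i = (⟨j, b⟩ : Σ j : Fin k, Fin (nn j)).1 ∨ (⟨j, b⟩ : Σ j : Fin k, Fin (nn j)).1.val = 0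
        then 1 else 0) = if i = j ∨ j.val = 0 then nn j else 0 := by
      intro j
      by_cases hc : i = j ∨ j.val = 0
      · rw [if_pos hc, Finset.sum_congr rfl fun b _ => if_pos hc, Finset.sum_const,
          Finset.card_univ, Fintype.card_fin, smul_eq_mul, mul_one]
      · rw [if_neg hc, Finset.sum_congr rfl fun b _ => if_neg hc, Finset.sum_const,
          Finset.card_univ, smul_eq_mul, mul_zero]
    rw [Finset.sum_congr rfl fun j _ => hinner j]
    have hsub : ({i, 0} : Finset (Fin k)) ⊆ Finset.univ := Finset.subset_univ _
    rw [← Finset.sum_sdiff hsub]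
    have hrest : ∑ j ∈ Finset.univ \ ({i, 0} : Finset (Fin k)),
        (if i = j ∨ j.val = 0 then nn j else 0) = 0 := by
      refine Finset.sum_eq_zero fun j hj => ?_
      simp only [Finset.mem_sdiff, Finset.mem_insert, Finset.mem_singleton] at hj
      rw [if_neg]
      rintro (hh | hh)
      · exact hj.2 (Or.inl hh.symm)
      · exact hj.2 (Or.inr (Fin.ext hh))
    rw [hrest, zero_add, Finset.sum_pair hi,
      if_pos (show i = i ∨ i.val = 0 from Or.inl rfl),
      if_pos (show i = 0 ∨ (0 : Fin k).val = 0 from Or.inr (by simp))]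
    exact Nat.add_comm _ _


theorem stmt1 (k : ℕ) [NeZero k] (hk : 2 ≤ k) (nn : Fin k → ℕ) (hnn : ∀ i, 1 ≤ nn i)
    (n : ℕ) (hn : n = ∑ i, nn i)
    (d : Fin k → ℝ) (hd0 : d 0 = (n : ℝ) - 1)
    (hdi : ∀ i : Fin k, i ≠ 0 → d i = (nn 0 : ℝ) + (nn i : ℝ) - 1) :
    somborCharpoly (joinGraph k nn) =
      (∏ i, (X + C (rt2 * d i)) ^ (nn i - 1)) *
        ((∏ i, (X - C (((nn i : ℝ) - 1) * rt2 * d i))) -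
          ∑ j ∈ Finset.univ \ {(0 : Fin k)},
            C ((nn 0 : ℝ) * (nn j : ℝ) * (d 0 ^ 2 + d j ^ 2)) *
              ∏ i ∈ Finset.univ \ {0, j}, (X - C (((nn i : ℝ) - 1) * rt2 * d i))) := by
  classical
  have hd_cast : ∀ (i : Fin k) (a : Fin (nn i)),
      ((sdeg (joinGraph k nn) ⟨i, a⟩ : ℕ) : ℝ) = d i := by
    intro i a
    rw [sdeg_join nn hnn i a]
    by_cases hi : i = 0
    · subst hi
      rw [if_pos rfl]
      have h1 : 1 ≤ ∑ j, nn j :=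
        le_trans (hnn 0) (Finset.single_le_sum (fun j _ => Nat.zero_le _) (Finset.mem_univ 0))
      rw [Nat.cast_sub h1, hd0, hn, Nat.cast_one]
    · rw [if_neg hi, hdi i hi]
      have h1 : 1 ≤ nn 0 + nn i := le_trans (hnn 0) (Nat.le_add_right _ _)
      rw [Nat.cast_sub h1, Nat.cast_add, Nat.cast_one]
  have hd_nonneg : ∀ i, 0 ≤ d i := fun i => by
    rw [← hd_cast i ⟨0, hnn i⟩]; exact Nat.cast_nonneg _
  set z : Fin k → Fin k → ℝ[X] := fun i j =>
    if i = 0 ∨ j = 0 then -C (Real.sqrt (d i ^ 2 + d j ^ 2)) else 0 with hz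
  have hchar : Matrix.charmatrix (somborMatrix (joinGraph k nn)) =
      BU.MM nn (fun _ => (X : ℝ[X])) (fun i => -C (rt2 * d i)) z := by
    ext u c
    obtain ⟨i, a⟩ := u; obtain ⟨j, b⟩ := c
    by_cases hij : i = j
    · subst hij
      by_cases hab : a = b
      · subst hab
        rw [Matrix.charmatrix_apply_eq]
        have hS : somborMatrix (joinGraph k nn) ⟨i,a⟩ ⟨i,a⟩ = 0 := by
          unfold somborMatrix
          rw [Matrix.of_apply, if_neg ((joinGraph k nn).irrefl)]
        rw [hS, map_zero, sub_zero]
        unfold BU.MM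
        rw [Matrix.of_apply, if_pos rfl]
      · have hne : (⟨i,a⟩ : Σ i, Fin (nn i)) ≠ ⟨i,b⟩ :=
          fun hh => hab ((BU.sig_eq_iff a b).1 hh)
        rw [Matrix.charmatrix_apply_ne _ _ _ hne]
        have hAdj : (joinGraph k nn).Adj ⟨i,a⟩ ⟨i,b⟩ := ⟨hne, Or.inl rfl⟩
        have hS : somborMatrix (joinGraph k nn) ⟨i,a⟩ ⟨i,b⟩ = rt2 * d i := by
          unfold somborMatrix
          rw [Matrix.of_apply, if_pos hAdj, hd_cast i a, hd_cast i b,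
            show d i ^ 2 + d i ^ 2 = 2 * d i ^ 2 from by ring,
            Real.sqrt_mul (by norm_num), Real.sqrt_sq (hd_nonneg i), rt2]
        rw [hS]
        unfold BU.MM
        rw [Matrix.of_apply, if_neg hne, if_pos rfl]
    · have hne : (⟨i,a⟩ : Σ i, Fin (nn i)) ≠ ⟨j,b⟩ := BU.sig_ne hij a b
      rw [Matrix.charmatrix_apply_ne _ _ _ hne]
      unfold BU.MM
      rw [Matrix.of_apply, if_neg hne, if_neg hij, hz]
      dsimp only
      by_cases hadj : i = 0 ∨ j = 0
      · have hAdj : (joinGraph k nn).Adj ⟨i,a⟩ ⟨j,b⟩ := by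
          refine ⟨hne, Or.inr ?_⟩
          rcases hadj with h | h
          · exact Or.inl (by dsimp only; rw [h]; simp)
          · exact Or.inr (by dsimp only; rw [h]; simp)
        have hS : somborMatrix (joinGraph k nn) ⟨i,a⟩ ⟨j,b⟩ =
            Real.sqrt (d i ^ 2 + d j ^ 2) := by
          unfold somborMatrix
          rw [Matrix.of_apply, if_pos hAdj, hd_cast i a, hd_cast j b]
        rw [hS, if_pos hadj]
      · have hAdj : ¬ (joinGraph k nn).Adj ⟨i,a⟩ ⟨j,b⟩ := by
          rintro ⟨-, h | h | h⟩
          · exact hij h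
          · exact hadj (Or.inl (Fin.ext h))
          · exact hadj (Or.inr (Fin.ext h))
        have hS : somborMatrix (joinGraph k nn) ⟨i,a⟩ ⟨j,b⟩ = 0 := by
          unfold somborMatrix
          rw [Matrix.of_apply, if_neg hAdj]
        rw [hS, if_neg hadj, map_zero, neg_zero]
  unfold somborCharpoly Matrix.charpoly
  rw [hchar, BU.blowup_det nn _ _ _ hnn]
  have haii : ∀ i : Fin k,
      (X : ℝ[X]) + ((nn i - 1 : ℕ) : ℝ[X]) * (-C (rt2 * d i)) =
      X - C (((nn i : ℝ) - 1) * rt2 * d i) := by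
    intro i
    rw [show ((nn i - 1 : ℕ) : ℝ[X]) = C (((nn i : ℕ) : ℝ) - 1) from by
        rw [← Polynomial.C_eq_natCast, Nat.cast_sub (hnn i), Nat.cast_one],
      mul_neg, ← Polynomial.C_mul, ← sub_eq_add_neg, ← mul_assoc]
  congr 1
  · exact Finset.prod_congr rfl fun i _ => by rw [sub_neg_eq_add]
  · rw [arrow_det (0 : Fin k) _ (fun i j hij hi0 hj0 => by
      rw [Matrix.of_apply, if_neg hij, hz]
      dsimp only
      rw [if_neg (by rintro (h | h); exacts [hi0 h, hj0 h]), mul_zero])]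
    refine congrArg₂ HSub.hSub ?_ ?_
    · refine Finset.prod_congr rfl fun i _ => ?_
      rw [Matrix.of_apply, if_pos rfl, haii i]
    · refine Finset.sum_congr rfl fun j hj => ?_
      have hj0 : j ≠ 0 := by simpa using (Finset.mem_sdiff.1 hj).2
      have hAij : (Matrix.of fun i j : Fin k =>
          if i = j then (X : ℝ[X]) + ((nn i - 1 : ℕ) : ℝ[X]) * (-C (rt2 * d i))
          else ((nn j : ℕ) : ℝ[X]) * z i j) 0 j *
          (Matrix.of fun i j : Fin k =>
          if i = j then (X : ℝ[X]) + ((nn i - 1 : ℕ) : ℝ[X]) * (-C (rt2 * d i))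
          else ((nn j : ℕ) : ℝ[X]) * z i j) j 0 =
          C ((nn 0 : ℝ) * (nn j : ℝ) * (d 0 ^ 2 + d j ^ 2)) := by
        rw [Matrix.of_apply, Matrix.of_apply, if_neg (fun hh => hj0 hh.symm), if_neg hj0, hz]
        dsimp only
        rw [if_pos (Or.inl rfl), if_pos (Or.inr rfl)]
        have hss : Real.sqrt (d 0 ^ 2 + d j ^ 2) * Real.sqrt (d j ^ 2 + d 0 ^ 2) =
            d 0 ^ 2 + d j ^ 2 := by
          rw [show d j ^ 2 + d 0 ^ 2 = d 0 ^ 2 + d j ^ 2 from by ring]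
          exact Real.mul_self_sqrt (by positivity)
        calc ((nn j : ℕ) : ℝ[X]) * -C (Real.sqrt (d 0 ^ 2 + d j ^ 2)) *
              (((nn 0 : ℕ) : ℝ[X]) * -C (Real.sqrt (d j ^ 2 + d 0 ^ 2)))
            = (((nn 0 : ℕ) : ℝ[X]) * ((nn j : ℕ) : ℝ[X])) *
              (C (Real.sqrt (d 0 ^ 2 + d j ^ 2)) * C (Real.sqrt (d j ^ 2 + d 0 ^ 2))) := by
              ring
          _ = C ((nn 0 : ℝ) * (nn j : ℝ) * (d 0 ^ 2 + d j ^ 2)) := by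
              rw [← Polynomial.C_mul, hss, ← Polynomial.C_eq_natCast, ← Polynomial.C_eq_natCast,
                ← Polynomial.C_mul, ← Polynomial.C_mul]
      rw [hAij]
      congr 1
      refine Finset.prod_congr rfl fun i _ => ?_
      rw [Matrix.of_apply, if_pos rfl, haii i]
end

section
/- Let k ≥ 2, l ≥ 1, m ≥ 1, n = l + (k−1)·m, and let Γ be the generalized join K_{1,k−1}[K_l, K_m, …, K_m] (one clique of size l joined completely to k−1 pairwise non-adjacent cliques of size m): its vertex set is the disjoint union of V_1, …, V_k with |V_1| = l and |V_i| = m for 2 ≤ i ≤ k, any two distinct vertices inside the same V_i are adjacent, every vertex of V_1 is adjacent to every vertex of V_j for each j ≥ 2, and there are no other edges. Set d_1 = n − 1 and d_2 = l + m − 1. Then the Sombor characteristic polynomial of Γ equals (x + d_1·√2)^{l−1} · (x + d_2·√2)^{(m−1)(k−1)} · (x − (m−1)·d_2·√2)^{k−2} · [ (x − (l−1)·d_1·√2)·(x − (m−1)·d_2·√2) − l·m·(k−1)·(d_1² + d_2²) ]. -/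
open Polynomial
open scoped Classical

section Aux

open Matrix Finset

lemma master_det {V ι F : Type*} [Fintype V] [Fintype ι] [DecidableEq V] [DecidableEq ι]
    [Field F] (blk : V → ι) (lam : ι → F) (hlam : ∀ i, lam i ≠ 0) (G : Matrix ι ι F) :
    (Matrix.of fun u v : V => (if u = v then lam (blk u) else 0) - G (blk u) (blk v)).det
      * ∏ i, lam i
    = (∏ v, lam (blk v)) *
      (Matrix.of fun i j : ι => (if i = j then lam i else 0)
        - ((Finset.univ.filter fun v => blk v = i).card : F) * G i j).det := by
  classical
  set cnt : ι → F := fun i => ((Finset.univ.filter fun v => blk v = i).card : F) with hcnt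
  set P : Matrix V ι F := Matrix.of fun v i => if blk v = i then 1 else 0 with hP
  set Pt : Matrix ι V F := Matrix.of fun i v => if blk v = i then 1 else 0 with hPt
  set D : Matrix V V F := Matrix.diagonal (fun v => lam (blk v)) with hD
  set Dinv : Matrix V V F := Matrix.diagonal (fun v => (lam (blk v))⁻¹) with hDinv
  set E : Matrix ι ι F := Matrix.of (fun i j => cnt i * ((lam i)⁻¹ * G i j)) with hE'
  have hDDinv : D * Dinv = 1 := by
    rw [hD, hDinv, Matrix.diagonal_mul_diagonal]
    rw [show (fun v => lam (blk v) * (lam (blk v))⁻¹) = fun _ => (1:F) from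
      funext fun v => mul_inv_cancel₀ (hlam _), Matrix.diagonal_one]
  have hK : ∀ u v : V, (P * G * Pt) u v = G (blk u) (blk v) := by
    intro u v
    simp [hP, hPt, Matrix.mul_apply, ite_mul, mul_ite, Finset.sum_ite_eq, Finset.sum_ite_eq']
  have h1 : (Matrix.of fun u v : V => (if u = v then lam (blk u) else 0) - G (blk u) (blk v))
      = D * (1 - Dinv * (P * G * Pt)) := by
    rw [Matrix.mul_sub, mul_one, ← Matrix.mul_assoc, hDDinv, Matrix.one_mul]
    ext u v
    simp [hK, hD, Matrix.diagonal_apply, eq_comm]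
  have hPG : ∀ v j, (P * G) v j = G (blk v) j := by
    intro v j; simp [hP, Matrix.mul_apply, ite_mul, Finset.sum_ite_eq, Finset.sum_ite_eq']
  have hE : Pt * (Dinv * (P * G)) = E := by
    ext i j
    rw [Matrix.mul_apply]
    have key : ∀ v, Pt i v * (Dinv * (P * G)) v j
        = if blk v = i then (lam i)⁻¹ * G i j else 0 := by
      intro v
      rw [hDinv, Matrix.diagonal_mul, hPG]
      by_cases h : blk v = i
      · rw [h]; simp [hPt, h]
      · simp [hPt, h]
    rw [Finset.sum_congr rfl (fun v _ => key v), ← Finset.sum_filter, Finset.sum_const,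
      nsmul_eq_mul]
    simp [hE', hcnt, mul_assoc]
  have hdetL : (Matrix.of fun u v : V => (if u = v then lam (blk u) else 0)
      - G (blk u) (blk v)).det = (∏ v, lam (blk v)) * (1 - E).det := by
    rw [h1, Matrix.det_mul, hD, Matrix.det_diagonal]
    congr 1
    rw [show Dinv * (P * G * Pt) = Dinv * (P * G) * Pt from (Matrix.mul_assoc _ _ _).symm,
      Matrix.det_one_sub_mul_comm, hE]
  have h2 : (Matrix.of fun i j : ι => (if i = j then lam i else 0) - cnt i * G i j)
      = Matrix.diagonal lam * (1 - E) := by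
    have hcancel : ∀ i j, lam i * (cnt i * ((lam i)⁻¹ * G i j)) = cnt i * G i j := by
      intro i j
      have h : lam i * (cnt i * ((lam i)⁻¹ * G i j)) = (lam i * (lam i)⁻¹) * (cnt i * G i j) := by
        ring
      rw [h, mul_inv_cancel₀ (hlam i), one_mul]
    rw [Matrix.mul_sub, mul_one]
    ext i j
    rw [Matrix.sub_apply, Matrix.diagonal_mul, hE']
    simp only [Matrix.of_apply]
    rw [hcancel, Matrix.diagonal_apply]
  have hdetR : (Matrix.of fun i j : ι => (if i = j then lam i else 0) - cnt i * G i j).det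
      = (∏ i, lam i) * (1 - E).det := by
    rw [h2, Matrix.det_mul, Matrix.det_diagonal]
  rw [hdetL, hdetR]; ring

lemma arrow_det_s2 {F : Type*} [Field F] {k : ℕ} [NeZero k] (hk : 2 ≤ k) (p q r s : F)
    (hs : s ≠ 0) (A : Matrix (Fin k) (Fin k) F)
    (hA : ∀ i j, A i j = if i = j then (if i = (0 : Fin k) then p else s)
        else if i = (0 : Fin k) then q else if j = (0 : Fin k) then r else 0) :
    A.det = s ^ (k - 2) * (p * s - ((k : F) - 1) * q * r) := by
  classical
  set Fm : Matrix (Fin k) (Fin 2) F :=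
    Matrix.of (fun i t => if t = 0 then (if i = (0:Fin k) then (1:F) else 0)
      else (if i = (0:Fin k) then 0 else 1)) with hFm
  set Gm : Matrix (Fin 2) (Fin k) F :=
    Matrix.of (fun t j => if t = 0 then (if j = (0:Fin k) then p - s else q)
      else (if j = (0:Fin k) then r else 0)) with hGm
  have hsplit : A = s • (1 : Matrix (Fin k) (Fin k) F) + Fm * Gm := by
    ext i j
    rw [hA]
    simp only [Matrix.add_apply, Matrix.smul_apply, Matrix.one_apply, Matrix.mul_apply]
    rw [Fin.sum_univ_two]
    simp only [hFm, hGm, Matrix.of_apply]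
    by_cases hi : i = (0:Fin k) <;> by_cases hj : j = (0:Fin k) <;>
      rcases eq_or_ne i j with rfl | hij <;> simp_all
  have hsum : ∀ a b : F, (∑ j : Fin k, if j = (0:Fin k) then a else b)
      = a + ((k:F)-1) * b := by
    intro a b
    have h1 : ∀ j : Fin k, (if j = (0:Fin k) then a else b)
        = b + (if j = (0:Fin k) then a - b else 0) := fun j => by split <;> ring
    simp_rw [h1]
    rw [Finset.sum_add_distrib, Finset.sum_const, Finset.sum_ite_eq' Finset.univ (0:Fin k)
      (fun _ => a - b)]
    simp [Finset.card_univ, nsmul_eq_mul]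
    ring
  have key : ∀ (a b c d : F), (∑ j : Fin k,
      (if j = (0:Fin k) then a else b) * (if j = (0:Fin k) then c else d))
      = a*c + ((k:F)-1)*(b*d) := by
    intro a b c d
    have h1 : ∀ j : Fin k, (if j = (0:Fin k) then a else b) * (if j = (0:Fin k) then c else d)
        = if j = (0:Fin k) then a*c else b*d := fun j => by split <;> rfl
    simp_rw [h1]
    exact hsum (a*c) (b*d)
  have hGF : (s⁻¹ • Gm) * Fm =
      Matrix.of (fun t u : Fin 2 => s⁻¹ * (if t = 0 then (if u = 0 then p - s else ((k:F)-1) * q)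
        else (if u = 0 then r else 0))) := by
    ext t u
    rw [Matrix.smul_mul, Matrix.smul_apply, Matrix.mul_apply, smul_eq_mul]
    congr 1
    fin_cases t <;> fin_cases u <;>
      simp only [hFm, hGm, Matrix.of_apply, Fin.isValue, Fin.zero_eta, Fin.mk_one,
        if_true, one_ne_zero, if_false, reduceIte] <;>
      rw [key] <;> ring
  have hA2 : A = s • ((1 : Matrix (Fin k) (Fin k) F) + s⁻¹ • (Fm * Gm)) := by
    rw [smul_add, smul_smul, mul_inv_cancel₀ hs, one_smul, hsplit]
  rw [hA2, Matrix.det_smul, ← Matrix.mul_smul, Matrix.det_one_add_mul_comm, hGF]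
  rw [Matrix.det_fin_two]
  simp only [Matrix.add_apply, Matrix.one_apply, Matrix.of_apply, Fin.isValue,
    if_true, if_false, one_ne_zero, zero_ne_one, reduceIte, Fintype.card_fin]
  obtain ⟨t, rfl⟩ : ∃ t, k = t + 2 := ⟨k - 2, by omega⟩
  have h2 : t + 2 - 2 = t := by omega
  rw [h2]
  field_simp
  ring

lemma fiber_card {k : ℕ} (nn : Fin k → ℕ) (j : Fin k) :
    (Finset.univ.filter (fun v : Σ i : Fin k, Fin (nn i) => v.1 = j)).card = nn j := by
  classical
  rw [show (Finset.univ.filter (fun v : Σ i : Fin k, Fin (nn i) => v.1 = j)).card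
      = Fintype.card {v : Σ i : Fin k, Fin (nn i) // v.1 = j} from
    (Fintype.card_subtype _).symm]
  have e : {v : Σ i : Fin k, Fin (nn i) // v.1 = j} ≃ Fin (nn j) :=
    { toFun := fun v => Fin.cast (congrArg nn v.2) v.1.2
      invFun := fun x => ⟨⟨j, x⟩, rfl⟩
      left_inv := by rintro ⟨⟨i, x⟩, rfl⟩; rfl
      right_inv := fun x => rfl }
  rw [Fintype.card_congr e, Fintype.card_fin]

lemma sum_if_fin {k l m : ℕ} [NeZero k] :
    ∑ i : Fin k, (if i = 0 then l else m) = l + (k-1)*m := by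
  rw [← Finset.add_sum_erase Finset.univ _ (Finset.mem_univ (0 : Fin k))]
  rw [if_pos rfl, Finset.sum_congr rfl (fun i hi => if_neg (Finset.ne_of_mem_erase hi)),
    Finset.sum_const, Finset.card_erase_of_mem (Finset.mem_univ _), Finset.card_univ,
    Fintype.card_fin, smul_eq_mul]

lemma prod_if_fin {β : Type*} [CommMonoid β] {k : ℕ} [NeZero k] (a b : β) :
    ∏ i : Fin k, (if i = 0 then a else b) = a * b ^ (k-1) := by
  rw [← Finset.mul_prod_erase Finset.univ _ (Finset.mem_univ (0 : Fin k))]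
  rw [if_pos rfl, Finset.prod_congr rfl (fun i hi => if_neg (Finset.ne_of_mem_erase hi)),
    Finset.prod_const, Finset.card_erase_of_mem (Finset.mem_univ _), Finset.card_univ,
    Fintype.card_fin]

lemma card_V_fin {k l m : ℕ} [NeZero k] :
    Fintype.card (Σ i : Fin k, Fin (if i = 0 then l else m)) = l + (k-1)*m := by
  rw [Fintype.card_sigma]
  simp only [Fintype.card_fin]
  exact sum_if_fin

lemma sdeg_join_s2 {k l m : ℕ} [NeZero k]
    (v : Σ i : Fin k, Fin (if i = 0 then l else m)) :
    sdeg (joinGraph k (fun i => if i = 0 then l else m)) v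
      = if v.1 = 0 then (l + (k-1)*m) - 1 else (l + m) - 1 := by
  classical
  set nn : Fin k → ℕ := fun i => if i = 0 then l else m with hnn
  set G := joinGraph k nn with hG
  have hset : sdeg G v = (Finset.univ.filter (fun u => G.Adj v u)).card := by
    rw [sdeg, Set.ncard_eq_toFinset_card', Set.toFinset_setOf]
  rw [hset]
  have hvz : ∀ i : Fin k, i.val = 0 ↔ i = 0 := fun i => Fin.val_eq_zero_iff
  by_cases h0 : v.1 = 0
  · rw [if_pos h0]
    have hpred : ∀ u, G.Adj v u ↔ u ≠ v := by
      intro u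
      constructor
      · rintro ⟨h, -⟩; exact h.symm
      · intro h; exact ⟨h.symm, Or.inr (Or.inl ((hvz _).mpr h0))⟩
    have hflt : Finset.univ.filter (fun u => G.Adj v u)
        = Finset.univ.filter (fun u => u ≠ v) := by
      apply Finset.filter_congr
      intro u _
      simp [hpred u]
    rw [hflt, Finset.filter_ne', Finset.card_erase_of_mem (Finset.mem_univ _),
      Finset.card_univ, card_V_fin]
  · rw [if_neg h0]
    have hv0 : (v.1 : ℕ) ≠ 0 := fun h => h0 ((hvz _).mp h)
    have hpred : ∀ u : Σ i : Fin k, Fin (nn i),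
        G.Adj v u ↔ (u.1 = v.1 ∨ u.1 = 0) ∧ u ≠ v := by
      intro u
      constructor
      · rintro ⟨h, c | c | c⟩
        · exact ⟨Or.inl c.symm, h.symm⟩
        · exact absurd c hv0
        · exact ⟨Or.inr ((hvz _).mp c), h.symm⟩
      · rintro ⟨c | c, h⟩
        · exact ⟨h.symm, Or.inl c.symm⟩
        · exact ⟨h.symm, Or.inr (Or.inr ((hvz _).mpr c))⟩
    have hflt : Finset.univ.filter (fun u => G.Adj v u)
        = Finset.univ.filter (fun u : Σ i : Fin k, Fin (nn i) =>
            (u.1 = v.1 ∨ u.1 = 0) ∧ u ≠ v) := by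
      apply Finset.filter_congr
      intro u _
      simp [hpred u]
    rw [hflt, ← Finset.filter_filter, Finset.filter_or, Finset.filter_ne']
    rw [Finset.card_erase_of_mem, Finset.card_union_of_disjoint]
    · rw [fiber_card, fiber_card]
      show (if v.1 = 0 then l else m) + (if (0 : Fin k) = 0 then l else m) - 1 = l + m - 1
      rw [if_neg h0, if_pos rfl]
      omega
    · rw [Finset.disjoint_filter]
      intro u _ h1 h2
      exact h0 (h1 ▸ h2)
    · exact Finset.mem_union_left _ (Finset.mem_filter.mpr ⟨Finset.mem_univ _, rfl⟩)

noncomputable def wR (k : ℕ) [NeZero k] (d1 d2 : ℝ) : Fin k → Fin k → ℝ := fun i j =>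
  if i = 0 then (if j = 0 then d1 * rt2 else Real.sqrt (d1^2 + d2^2))
  else (if j = 0 then Real.sqrt (d1^2 + d2^2) else (if i = j then d2 * rt2 else 0))

lemma sqrt_two_self {d : ℝ} (hd : 0 ≤ d) : Real.sqrt (d^2 + d^2) = d * rt2 := by
  rw [show d^2 + d^2 = 2 * d^2 by ring, Real.sqrt_mul (by norm_num), Real.sqrt_sq hd, rt2,
    mul_comm]

lemma sombor_entry {k l m : ℕ} [NeZero k] (hl : 1 ≤ l) (hm : 1 ≤ m)
    (u v : Σ i : Fin k, Fin (if i = 0 then l else m)) :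
    somborMatrix (joinGraph k (fun i => if i = 0 then l else m)) u v
      = wR k ((l:ℝ) + ((k:ℝ)-1)*(m:ℝ) - 1) ((l:ℝ) + (m:ℝ) - 1) u.1 v.1
        - (if u = v then wR k ((l:ℝ) + ((k:ℝ)-1)*(m:ℝ) - 1) ((l:ℝ) + (m:ℝ) - 1) u.1 u.1
            else 0) := by
  classical
  set nn : Fin k → ℕ := fun i => if i = 0 then l else m with hnn
  set G := joinGraph k nn with hG
  set d1 : ℝ := (l:ℝ) + ((k:ℝ)-1)*(m:ℝ) - 1 with hd1
  set d2 : ℝ := (l:ℝ) + (m:ℝ) - 1 with hd2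
  have hk1 : 1 ≤ k := Nat.one_le_iff_ne_zero.mpr (NeZero.ne k)
  have hd1' : ∀ w : Σ i : Fin k, Fin (nn i), w.1 = 0 → ((sdeg G w : ℝ)) = d1 := by
    intro w hw
    rw [sdeg_join_s2, if_pos hw, hd1]
    have h1 : 1 ≤ l + (k-1)*m := le_trans hl (Nat.le_add_right _ _)
    push_cast [h1]
    have hkk : ((k - 1 : ℕ) : ℝ) = (k : ℝ) - 1 := by push_cast [hk1]; ring
    rw [hkk]
  have hd2' : ∀ w : Σ i : Fin k, Fin (nn i), w.1 ≠ 0 → ((sdeg G w : ℝ)) = d2 := by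
    intro w hw
    rw [sdeg_join_s2, if_neg hw, hd2]
    have h1 : 1 ≤ l + m := le_trans hl (Nat.le_add_right _ _)
    push_cast [h1]
    ring
  have hl' : (1:ℝ) ≤ (l:ℝ) := by exact_mod_cast hl
  have hm' : (0:ℝ) ≤ (m:ℝ) := Nat.cast_nonneg m
  have hk' : (1:ℝ) ≤ (k:ℝ) := by exact_mod_cast hk1
  have hd1nn : 0 ≤ d1 := by
    rw [hd1]
    have := mul_nonneg (sub_nonneg.mpr hk') hm'
    linarith
  have hd2nn : 0 ≤ d2 := by
    rw [hd2]
    have hm'' : (1:ℝ) ≤ (m:ℝ) := by exact_mod_cast hm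
    linarith
  have hvz : ∀ i : Fin k, i.val = 0 ↔ i = 0 := fun i => Fin.val_eq_zero_iff
  have hadj : ∀ u v : Σ i : Fin k, Fin (nn i),
      G.Adj u v ↔ u ≠ v ∧ (u.1 = v.1 ∨ u.1 = 0 ∨ v.1 = 0) := by
    intro u v
    show (u ≠ v ∧ (u.1 = v.1 ∨ u.1.val = 0 ∨ v.1.val = 0)) ↔ _
    rw [hvz, hvz]
  rw [somborMatrix, Matrix.of_apply]
  by_cases huv : u = v
  · subst huv
    rw [if_neg (G.loopless.irrefl u), if_pos rfl, sub_self]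
  · rw [if_neg huv]
    by_cases hu0 : u.1 = 0 <;> by_cases hv0 : v.1 = 0
    · rw [if_pos ((hadj u v).mpr ⟨huv, Or.inr (Or.inl hu0)⟩), hd1' u hu0, hd1' v hv0,
        sqrt_two_self hd1nn]
      simp only [wR]
      rw [if_pos hu0, if_pos hv0, sub_zero]
    · rw [if_pos ((hadj u v).mpr ⟨huv, Or.inr (Or.inl hu0)⟩), hd1' u hu0, hd2' v hv0]
      simp only [wR]
      rw [if_pos hu0, if_neg hv0, sub_zero]
    · rw [if_pos ((hadj u v).mpr ⟨huv, Or.inr (Or.inr hv0)⟩), hd2' u hu0, hd1' v hv0,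
        add_comm ((((l:ℝ) + (m:ℝ) - 1))^2)]
      simp only [wR]
      rw [if_neg hu0, if_pos hv0, sub_zero]
    · by_cases hbb : u.1 = v.1
      · rw [if_pos ((hadj u v).mpr ⟨huv, Or.inl hbb⟩), hd2' u hu0, hd2' v hv0,
          sqrt_two_self hd2nn]
        simp only [wR]
        rw [if_neg hu0, if_neg hv0, if_pos hbb, sub_zero]
      · have hna : ¬ G.Adj u v := by
          rw [hadj]
          rintro ⟨-, c | c | c⟩
          exacts [hbb c, hu0 c, hv0 c]
        rw [if_neg hna]
        simp only [wR]
        rw [if_neg hu0, if_neg hv0, if_neg hbb, sub_zero]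

end Aux

theorem stmt2 (k l m : ℕ) [NeZero k] (hk : 2 ≤ k) (hl : 1 ≤ l) (hm : 1 ≤ m)
    (n : ℕ) (hn : n = l + (k - 1) * m) :
    somborCharpoly (joinGraph k (fun i => if i = 0 then l else m)) =
      (X + C (((n : ℝ) - 1) * rt2)) ^ (l - 1) *
      (X + C (((l : ℝ) + (m : ℝ) - 1) * rt2)) ^ ((m - 1) * (k - 1)) *
      (X - C (((m : ℝ) - 1) * ((l : ℝ) + (m : ℝ) - 1) * rt2)) ^ (k - 2) *
      ((X - C (((l : ℝ) - 1) * ((n : ℝ) - 1) * rt2)) *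
          (X - C (((m : ℝ) - 1) * ((l : ℝ) + (m : ℝ) - 1) * rt2)) -
        C ((l : ℝ) * (m : ℝ) * ((k : ℝ) - 1) *
            (((n : ℝ) - 1) ^ 2 + ((l : ℝ) + (m : ℝ) - 1) ^ 2))) := by
  classical
  have hk1 : 1 ≤ k := le_trans (by norm_num) hk
  set nn : Fin k → ℕ := fun i => if i = 0 then l else m with hnn
  set d1 : ℝ := (n : ℝ) - 1 with hd1
  set d2 : ℝ := (l : ℝ) + (m : ℝ) - 1 with hd2
  have hd1eq : d1 = (l:ℝ) + ((k:ℝ)-1)*(m:ℝ) - 1 := by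
    rw [hd1, hn]
    push_cast [hk1]
    ring
  set φ : Polynomial ℝ →+* RatFunc ℝ :=
    (algebraMap (Polynomial ℝ) (RatFunc ℝ) : Polynomial ℝ →+* RatFunc ℝ) with hφ
  have hinj : Function.Injective φ := RatFunc.algebraMap_injective ℝ
  apply hinj
  set x : RatFunc ℝ := φ X with hx
  set Cf : ℝ → RatFunc ℝ := fun r => φ (Polynomial.C r) with hCf
  have hCfa : ∀ a : ℝ, φ (Polynomial.C a) = Cf a := fun a => rfl
  set w : Fin k → Fin k → ℝ := wR k d1 d2 with hw
  set lam : Fin k → RatFunc ℝ := fun i => x + Cf (w i i) with hlam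
  set Gm : Matrix (Fin k) (Fin k) (RatFunc ℝ) := Matrix.of fun i j => Cf (w i j) with hGm
  -- basic Cf facts
  have hCsub : ∀ a b : ℝ, Cf (a - b) = Cf a - Cf b := fun a b => by
    rw [hCf]; show φ (Polynomial.C (a - b)) = _; rw [Polynomial.C_sub, map_sub]
  have hCmul : ∀ a b : ℝ, Cf (a * b) = Cf a * Cf b := fun a b => by
    rw [hCf]; show φ (Polynomial.C (a * b)) = _; rw [Polynomial.C_mul, map_mul]
  have hCnat : ∀ j : ℕ, Cf (j : ℝ) = (j : RatFunc ℝ) := fun j => by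
    rw [hCf]; show φ (Polynomial.C ((j:ℕ) : ℝ)) = _
    rw [Polynomial.C_eq_natCast, map_natCast]
  have hCone : Cf 1 = 1 := by
    rw [hCf]; show φ (Polynomial.C 1) = _; rw [Polynomial.C_1, map_one]
  have hCadd : ∀ a b : ℝ, Cf (a + b) = Cf a + Cf b := fun a b => by
    rw [hCf]; show φ (Polynomial.C (a + b)) = _; rw [Polynomial.C_add, map_add]
  have hCpow : ∀ (a : ℝ) (j : ℕ), Cf (a ^ j) = Cf a ^ j := fun a j => by
    rw [hCf]; show φ (Polynomial.C (a ^ j)) = _; rw [map_pow, map_pow]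
  have hCzero : Cf 0 = 0 := by
    rw [hCf]; show φ (Polynomial.C 0) = _; rw [Polynomial.C_0, map_zero]
  -- nonvanishing
  have hXadd : ∀ c : ℝ, x + Cf c ≠ 0 := by
    intro c h
    have h1 : (X + Polynomial.C c : Polynomial ℝ) = 0 := by
      apply hinj
      rw [map_add, map_zero, hCfa]
      exact h
    have h2 := congrArg (fun p : Polynomial ℝ => p.coeff 1) h1
    simp [Polynomial.coeff_X_one, Polynomial.coeff_C] at h2
  have hXsub : ∀ c : ℝ, x - Cf c ≠ 0 := by
    intro c
    have h : x - Cf c = x + Cf (-c) := by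
      rw [show (-c : ℝ) = 0 - c by ring, hCsub, hCzero]
      ring
    rw [h]
    exact hXadd _
  -- entries of the Sombor matrix
  have hentry : ∀ u v : Σ i : Fin k, Fin (nn i),
      somborMatrix (joinGraph k nn) u v = w u.1 v.1 - (if u = v then w u.1 u.1 else 0) := by
    intro u v
    rw [hw, hd1eq]
    exact sombor_entry hl hm u v
  have hlhs : somborCharpoly (joinGraph k nn)
      = (Matrix.charmatrix (somborMatrix (joinGraph k nn))).det := rfl
  rw [hlhs, RingHom.map_det]
  have hmap : φ.mapMatrix (Matrix.charmatrix (somborMatrix (joinGraph k nn)))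
      = Matrix.of fun u v : Σ i : Fin k, Fin (nn i) =>
          (if u = v then lam (Sigma.fst u) else 0) - Gm (Sigma.fst u) (Sigma.fst v) := by
    ext u v
    rw [RingHom.mapMatrix_apply, Matrix.map_apply, Matrix.of_apply]
    by_cases huv : u = v
    · subst huv
      rw [Matrix.charmatrix_apply_eq, hentry u u, if_pos rfl, if_pos rfl, sub_self,
        Polynomial.C_0, sub_zero]
      show φ X = lam u.1 - Gm u.1 u.1
      rw [hlam, hGm]
      show φ X = (x + Cf (w u.1 u.1)) - Cf (w u.1 u.1)
      rw [hx]
      ring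
    · rw [Matrix.charmatrix_apply_ne _ _ _ huv, hentry u v, if_neg huv, if_neg huv, sub_zero,
        map_neg, hCfa]
      show -(Cf (w u.1 v.1)) = 0 - Gm u.1 v.1
      rw [hGm]
      show -(Cf (w u.1 v.1)) = 0 - Cf (w u.1 v.1)
      ring
  rw [hmap]
  have hlam_ne : ∀ i, lam i ≠ 0 := fun i => by rw [hlam]; exact hXadd _
  have hmaster := master_det (V := Σ i : Fin k, Fin (nn i)) Sigma.fst lam hlam_ne Gm
  -- the k × k determinant
  have hlamB : ∀ i : Fin k, i ≠ 0 → lam i = x + Cf (d2 * rt2) := by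
    intro i hi
    rw [hlam]
    show x + Cf (w i i) = _
    rw [hw]
    show x + Cf (wR k d1 d2 i i) = _
    rw [wR]
    simp [hi]
  have hlam0 : lam 0 = x + Cf (d1 * rt2) := by
    rw [hlam]
    show x + Cf (w 0 0) = _
    rw [hw]
    show x + Cf (wR k d1 d2 0 0) = _
    rw [wR]
    simp
  have hnn0 : nn 0 = l := by rw [hnn]; simp
  have hnnm : ∀ i : Fin k, i ≠ 0 → nn i = m := fun i hi => by rw [hnn]; simp [hi]
  have hCl1 : Cf (((l:ℝ)-1) * d1 * rt2) = ((l : RatFunc ℝ) - 1) * Cf (d1 * rt2) := by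
    rw [show ((l:ℝ)-1) * d1 * rt2 = ((l:ℝ)-1) * (d1 * rt2) by ring, hCmul, hCsub,
      hCnat, hCone]
  have hCm1 : Cf (((m:ℝ)-1) * d2 * rt2) = ((m : RatFunc ℝ) - 1) * Cf (d2 * rt2) := by
    rw [show ((m:ℝ)-1) * d2 * rt2 = ((m:ℝ)-1) * (d2 * rt2) by ring, hCmul, hCsub,
      hCnat, hCone]
  have hCls : Cf ((l:ℝ) * Real.sqrt (d1^2 + d2^2))
      = (l : RatFunc ℝ) * Cf (Real.sqrt (d1^2 + d2^2)) := by rw [hCmul, hCnat]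
  have hCms : Cf ((m:ℝ) * Real.sqrt (d1^2 + d2^2))
      = (m : RatFunc ℝ) * Cf (Real.sqrt (d1^2 + d2^2)) := by rw [hCmul, hCnat]
  have harrow : (Matrix.of fun i j : Fin k => (if i = j then lam i else 0)
        - ((Finset.univ.filter fun v : Σ i : Fin k, Fin (nn i) => Sigma.fst v = i).card
            : RatFunc ℝ) * Gm i j).det
      = (x - Cf (((m:ℝ)-1) * d2 * rt2)) ^ (k-2) *
        ((x - Cf (((l:ℝ)-1) * d1 * rt2)) * (x - Cf (((m:ℝ)-1) * d2 * rt2))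
          - ((k:RatFunc ℝ) - 1) * (- Cf ((l:ℝ) * Real.sqrt (d1^2 + d2^2)))
            * (- Cf ((m:ℝ) * Real.sqrt (d1^2 + d2^2)))) := by
    apply arrow_det_s2 hk _ _ _ _ (hXsub _)
    intro i j
    rw [Matrix.of_apply, fiber_card nn i, hGm]
    show (if i = j then lam i else 0) - ((nn i : ℕ) : RatFunc ℝ) * Cf (w i j) = _
    rw [hw]
    show (if i = j then lam i else 0) - ((nn i : ℕ) : RatFunc ℝ) * Cf (wR k d1 d2 i j) = _
    rw [wR]
    rw [hCl1, hCm1, hCls, hCms]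
    by_cases hi : i = 0 <;> by_cases hj : j = 0
    · subst hi; subst hj
      rw [hnn0]
      simp [hlam0]
      ring
    · subst hi
      rw [hnn0]
      simp [hj, Ne.symm hj]
    · subst hj
      rw [hnnm i hi]
      simp [hi]
    · rcases eq_or_ne i j with rfl | hij
      · rw [hnnm i hi]
        simp [hi, hlamB i hi]
        ring
      · rw [hnnm i hi]
        simp [hi, hj, hij, hCzero]
  -- products
  have hprodk : (∏ i, lam i) = lam 0 * (x + Cf (d2 * rt2)) ^ (k - 1) := by
    have h1 : ∀ i : Fin k, lam i = if i = 0 then lam 0 else x + Cf (d2 * rt2) := by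
      intro i
      by_cases hi : i = 0
      · rw [if_pos hi, hi]
      · rw [if_neg hi, hlamB i hi]
    rw [Finset.prod_congr rfl (fun i _ => h1 i), prod_if_fin]
  have hprodV : (∏ v : Σ i : Fin k, Fin (nn i), lam (Sigma.fst v))
      = lam 0 ^ l * ((x + Cf (d2 * rt2)) ^ m) ^ (k - 1) := by
    rw [← Finset.univ_sigma_univ, Finset.prod_sigma]
    have h1 : ∀ i : Fin k, (∏ _a : Fin (nn i), lam i)
        = if i = 0 then lam 0 ^ l else (x + Cf (d2 * rt2)) ^ m := by
      intro i
      rw [Finset.prod_const, Finset.card_univ, Fintype.card_fin]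
      by_cases hi : i = 0
      · rw [if_pos hi, hi, hnn0]
      · rw [if_neg hi, hlamB i hi, hnnm i hi]
    rw [Finset.prod_congr rfl (fun i _ => h1 i), prod_if_fin]
  -- right-hand side
  have hsq : Real.sqrt (d1^2 + d2^2) * Real.sqrt (d1^2 + d2^2) = d1^2 + d2^2 :=
    Real.mul_self_sqrt (by positivity)
  have hbig : ((k:RatFunc ℝ) - 1) * (- Cf ((l:ℝ) * Real.sqrt (d1^2 + d2^2)))
        * (- Cf ((m:ℝ) * Real.sqrt (d1^2 + d2^2)))
      = Cf ((l:ℝ) * (m:ℝ) * ((k:ℝ)-1) * (d1^2 + d2^2)) := by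
    rw [show (l:ℝ) * (m:ℝ) * ((k:ℝ)-1) * (d1^2 + d2^2)
        = ((l:ℝ) * Real.sqrt (d1^2+d2^2)) * ((m:ℝ) * Real.sqrt (d1^2+d2^2)) * ((k:ℝ)-1)
        from by rw [show ((l:ℝ) * Real.sqrt (d1^2+d2^2)) * ((m:ℝ) * Real.sqrt (d1^2+d2^2))
            * ((k:ℝ)-1) = (l:ℝ) * (m:ℝ) * ((k:ℝ)-1)
            * (Real.sqrt (d1^2+d2^2) * Real.sqrt (d1^2+d2^2)) by ring, hsq]]
    simp only [hCmul, hCsub, hCnat, hCone]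
    ring
  have hRHS : φ ((X + Polynomial.C (d1 * rt2)) ^ (l - 1) *
        (X + Polynomial.C (d2 * rt2)) ^ ((m - 1) * (k - 1)) *
        (X - Polynomial.C (((m : ℝ) - 1) * d2 * rt2)) ^ (k - 2) *
        ((X - Polynomial.C (((l : ℝ) - 1) * d1 * rt2)) *
            (X - Polynomial.C (((m : ℝ) - 1) * d2 * rt2)) -
          Polynomial.C ((l : ℝ) * (m : ℝ) * ((k : ℝ) - 1) * (d1 ^ 2 + d2 ^ 2))))
      = (x + Cf (d1 * rt2)) ^ (l - 1) * (x + Cf (d2 * rt2)) ^ ((m - 1) * (k - 1)) *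
        (x - Cf (((m:ℝ)-1) * d2 * rt2)) ^ (k - 2) *
        ((x - Cf (((l:ℝ)-1) * d1 * rt2)) * (x - Cf (((m:ℝ)-1) * d2 * rt2))
          - Cf ((l:ℝ) * (m:ℝ) * ((k:ℝ)-1) * (d1^2 + d2^2))) := by
    simp only [map_mul, map_pow, map_sub, map_add, hCfa, ← hx]
    simp only [hCmul, hCsub, hCadd, hCpow]
  rw [hRHS]
  -- final cancellation
  have hne : lam 0 * (x + Cf (d2 * rt2)) ^ (k - 1) ≠ 0 :=
    mul_ne_zero (hlam_ne 0) (pow_ne_zero _ (hXadd _))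
  apply mul_right_cancel₀ hne
  rw [← hprodk, hmaster, harrow, hprodk, hprodV, hbig, hlam0]
  have e1 : (x + Cf (d1 * rt2)) ^ l = (x + Cf (d1 * rt2)) ^ (l - 1) * (x + Cf (d1 * rt2)) := by
    conv_lhs => rw [show l = (l - 1) + 1 from by omega]
    rw [pow_succ]
  have e2 : ((x + Cf (d2 * rt2)) ^ m) ^ (k - 1)
      = (x + Cf (d2 * rt2)) ^ ((m - 1) * (k - 1)) * (x + Cf (d2 * rt2)) ^ (k - 1) := by
    rw [← pow_mul, ← pow_add]
    congr 1
    have h3 : (m - 1) + 1 = m := by omega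
    calc m * (k - 1) = ((m - 1) + 1) * (k - 1) := by rw [h3]
      _ = (m - 1) * (k - 1) + (k - 1) := by ring
  rw [e1, e2]
  ring
end

section
/- For every odd integer n ≥ 3, the Sombor characteristic polynomial of the commuting graph Δ(D_{2n}) of the dihedral group D_{2n} equals (x + (n−1)·√2)^{n−2} · x^{n−1} · ( x³ + √2·(3n − n² − 2)·x² + (15n² − 9n³ − 10n + 2)·x + √2·(4n⁵ − 16n⁴ + 22n³ − 14n² + 4n) ). -/
open Polynomial
open scoped Classical

set_option linter.unusedSectionVars false
set_option linter.unusedVariables false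

lemma key_cubic {K : Type*} [Field K] (t R b c N al ta : K)
    (hR : R^2 = 2) (hb : b^2 = 5*N^2 - 6*N + 2) (hc : c^2 = 4*N^2 - 4*N + 2)
    (hu : (t + R*(N-1)) * al = 1) (hv : t * ta = 1) :
    (t + R*(N-1))^2 * t *
      Matrix.det !![1 - N*al*(R*(N-1)), -al, -(al*(N-2)*(b - R*(N-1)));
        -(N*(b - R*(N-1))*al*(R*(N-1))), 1 - (b - R*(N-1))*al,
          -((b - R*(N-1))*(b - R*(N-1))*al*(N-2) + N*ta*c^2);
        -(al*(R*(N-1))), -al, 1 + al*(b - R*(N-1))] =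
    t^3 + R*(3*N - N^2 - 2)*t^2 + (15*N^2 - 9*N^3 - 10*N + 2)*t
      + R*(4*N^5 - 16*N^4 + 22*N^3 - 14*N^2 + 4*N) := by
  rw [Matrix.det_fin_three]
  simp only [Matrix.cons_val_zero, Matrix.cons_val_one, Matrix.cons_val_two, Matrix.cons_val_fin_one, Matrix.head_cons, Matrix.head_fin_const, Matrix.cons_val', Matrix.empty_val', Matrix.of_apply, Matrix.tail_cons]
  linear_combination (t^2*R^2*al^2*ta - 3*t^2*R^2*N*al^2*ta + 3*t^2*R^2*N^2*al^2*ta - t^2*R^2*N^3*al^2*ta - 2*t^3*R*al^2*ta + 4*t^3*R*N*al^2*ta - 2*t^3*R*N^2*al^2*ta + t^4*al^2*ta - t^4*N*al^2*ta) * hb + (2*t*R^3*N*al^2*ta - 7*t*R^3*N^2*al^2*ta + 9*t*R^3*N^3*al^2*ta - 5*t*R^3*N^4*al^2*ta + t*R^3*N^5*al^2*ta - 5*t^2*R^2*N*al^2*ta + 12*t^2*R^2*N^2*al^2*ta - 9*t^2*R^2*N^3*al^2*ta + 2*t^2*R^2*N^4*al^2*ta + 4*t^3*R*N*al^2*ta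 - 5*t^3*R*N^2*al^2*ta + t^3*R*N^3*al^2*ta - t^4*N*al^2*ta) * hc + (4*t*R*N*ta - 14*t*R*N^2*ta + 22*t*R*N^3*ta - 16*t*R*N^4*ta + 4*t*R*N^5*ta - 4*t*R^2*N*al*ta + 18*t*R^2*N^2*al*ta - 36*t*R^2*N^3*al*ta + 38*t*R^2*N^4*al*ta - 20*t*R^2*N^5*al*ta + 4*t*R^2*N^6*al*ta + t*R^2*c^2*N*al*ta - 2*t*R^2*c^2*N^2*al*ta + t*R^2*c^2*N^3*al*ta + 2*t^2*ta - 10*t^2*N*ta + 15*t^2*N^2*ta - 9*t^2*N^3*ta - 2*t^2*R*al*ta + 16*t^2*R*N*al*ta - 39*t^2*R*N^2*al*ta + 46*t^2*R*N^3*al*ta - 25*t^2*R*N^4*al*ta + 4*t^2*R*N^5*al*ta - 2*t^2*R*c^2*N*al*ta + 2*t^2*R*c^2*N^2*al*ta - t^2*R^2*ta + 2*t^2*R^2*N*ta - t^2*R^2*N^2*ta + t^2*R^3*al*ta - 4*t^2*R^3*N*al*ta + 6*t^2*R^3*N^2*al*ta - 4*t^2*R^3*N^3*al*ta + t^2*R^3*N^4*al*ta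 + 2*t^3*al*ta - 10*t^3*N*al*ta + 15*t^3*N^2*al*ta - 9*t^3*N^3*al*ta + t^3*c^2*N*al*ta + t^3*R*N*ta - t^3*R*N^2*ta - t^3*R^2*al*ta + 3*t^3*R^2*N*al*ta - 3*t^3*R^2*N^2*al*ta + t^3*R^2*N^3*al*ta) * hu + (4*R*N - 14*R*N^2 + 22*R*N^3 - 16*R*N^4 + 4*R*N^5 + 2*t - 10*t*N + 15*t*N^2 - 9*t*N^3 - t*R^2 + 2*t*R^2*N - t*R^2*N^2 - t*R^2*b^2*al^2 + 3*t*R^2*b^2*N*al^2 - 3*t*R^2*b^2*N^2*al^2 + t*R^2*b^2*N^3*al^2 - t*R^3*N*al + 3*t*R^3*N^2*al - 3*t*R^3*N^3*al + t*R^3*N^4*al + t*R^4*al^2 - 5*t*R^4*N*al^2 + 10*t*R^4*N^2*al^2 - 10*t*R^4*N^3*al^2 + 5*t*R^4*N^4*al^2 - t*R^4*N^5*al^2 + t^2*R*N - t^2*R*N^2 + 2*t^2*R*b^2*al^2 - 4*t^2*R*b^2*N*al^2 + 2*t^2*R*b^2*N^2*al^2 + 2*t^2*R^2*N*al - 4*t^2*R^2*N^2*al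 + 2*t^2*R^2*N^3*al - 2*t^2*R^3*al^2 + 8*t^2*R^3*N*al^2 - 12*t^2*R^3*N^2*al^2 + 8*t^2*R^3*N^3*al^2 - 2*t^2*R^3*N^4*al^2 - t^3*b^2*al^2 + t^3*b^2*N*al^2 - t^3*R*N*al + t^3*R*N^2*al + t^3*R^2*al^2 - 3*t^3*R^2*N*al^2 + 3*t^3*R^2*N^2*al^2 - t^3*R^2*N^3*al^2) * hv


namespace Work

open DihedralGroup

open DihedralGroup

variable {n : ℕ} [NeZero n] (hn : 3 ≤ n) (hodd : Odd n)

lemma zmod_two_mul (i : ZMod n) (h : i + i = 0) (hodd : Odd n) : i = 0 := by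
  have hk : 2 * ((n+1)/2) = n + 1 := by
    obtain ⟨m, hm⟩ := hodd; omega
  have h2 : (2 : ZMod n) * (((n+1)/2 : ℕ) : ZMod n) = 1 := by
    have : ((2 * ((n+1)/2) : ℕ) : ZMod n) = ((n + 1 : ℕ) : ZMod n) := by rw [hk]
    push_cast at this
    simpa [ZMod.natCast_self] using this
  calc i = (2 * (((n+1)/2 : ℕ) : ZMod n)) * i := by rw [h2, one_mul]
    _ = (((n+1)/2 : ℕ) : ZMod n) * (i + i) := by ring
    _ = 0 := by rw [h, mul_zero]

lemma adj_rr {i j : ZMod n} :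
    (commutingGraph (DihedralGroup n)).Adj (r i) (r j) ↔ i ≠ j := by
  simp [commutingGraph, add_comm]

lemma adj_rsr (hodd : Odd n) {i j : ZMod n} :
    (commutingGraph (DihedralGroup n)).Adj (r i) (sr j) ↔ i = 0 := by
  constructor
  · rintro ⟨-, hc⟩
    simp only [r_mul_sr, sr_mul_r, sr.injEq] at hc
    have : i + i = 0 := by linear_combination -hc
    exact zmod_two_mul i this hodd
  · rintro rfl
    exact ⟨by simp [-r_zero], by simp⟩

lemma adj_srr (hodd : Odd n) {i j : ZMod n} :
    (commutingGraph (DihedralGroup n)).Adj (sr i) (r j) ↔ j = 0 := by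
  rw [SimpleGraph.adj_comm]; exact adj_rsr hodd

lemma not_adj_srsr (hodd : Odd n) {i j : ZMod n} :
    ¬ (commutingGraph (DihedralGroup n)).Adj (sr i) (sr j) := by
  rintro ⟨hne, hc⟩
  simp only [sr_mul_sr, r.injEq] at hc
  have : (j - i) + (j - i) = 0 := by linear_combination hc
  have := zmod_two_mul _ this hodd
  apply hne
  have : i = j := by linear_combination -this
  rw [this]

lemma sdeg_sr (hodd : Odd n) (i : ZMod n) :
    sdeg (commutingGraph (DihedralGroup n)) (sr i) = 1 := by
  have : {u | (commutingGraph (DihedralGroup n)).Adj (sr i) u} = {r 0} := by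
    ext u
    cases u with
    | r j => simp [adj_srr hodd, eq_comm, -r_zero]
    | sr j => simp [not_adj_srsr hodd, -r_zero]
  rw [sdeg, this, Set.ncard_singleton]

lemma sdeg_r0 (hodd : Odd n) :
    sdeg (commutingGraph (DihedralGroup n)) (r 0) = 2 * n - 1 := by
  have : {u | (commutingGraph (DihedralGroup n)).Adj (r 0) u} = {r (0 : ZMod n)}ᶜ := by
    ext u
    cases u with
    | r j => simp [adj_rr, eq_comm, -r_zero]
    | sr j => simp [adj_rsr hodd, -r_zero]
  rw [sdeg, this, Set.ncard_eq_toFinset_card']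
  simp [Set.toFinset_compl, Finset.card_compl, DihedralGroup.card, -r_zero]

lemma sdeg_r (hodd : Odd n) {i : ZMod n} (hi : i ≠ 0) :
    sdeg (commutingGraph (DihedralGroup n)) (r i) = n - 1 := by
  have : {u | (commutingGraph (DihedralGroup n)).Adj (r i) u} = r '' {i}ᶜ := by
    ext u
    cases u with
    | r j => simp [adj_rr, eq_comm]
    | sr j => simp [adj_rsr hodd, hi]
  rw [sdeg, this, Set.ncard_image_of_injective _ (fun a b => by simp),
    Set.ncard_eq_toFinset_card']
  simp [Set.toFinset_compl, Finset.card_compl, ZMod.card]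



abbrev KK := FractionRing (Polynomial ℝ)

noncomputable def phm : Polynomial ℝ →+* KK := algebraMap _ _
noncomputable def psm : ℝ →+* KK := phm.comp Polynomial.C

@[simp] lemma phm_C (x : ℝ) : phm (Polynomial.C x) = psm x := rfl

noncomputable def aR (n : ℕ) : ℝ := rt2 * ((n:ℝ) - 1)
noncomputable def bR (n : ℕ) : ℝ := Real.sqrt ((2*(n:ℝ)-1)^2 + ((n:ℝ)-1)^2)
noncomputable def cR (n : ℕ) : ℝ := Real.sqrt ((2*(n:ℝ)-1)^2 + 1)

def ee (n : ℕ) : ZMod n ⊕ ZMod n ≃ DihedralGroup n where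
  toFun := Sum.elim r sr
  invFun x := match x with | r i => .inl i | sr i => .inr i
  left_inv := by rintro (i|i) <;> rfl
  right_inv := by rintro (i|i) <;> rfl

noncomputable def Dmat (n : ℕ) : Matrix (ZMod n ⊕ ZMod n) (ZMod n ⊕ ZMod n) KK :=
  Matrix.diagonal (Sum.elim (fun _ => phm X + psm (aR n)) (fun _ => phm X))

noncomputable def DmatInv (n : ℕ) : Matrix (ZMod n ⊕ ZMod n) (ZMod n ⊕ ZMod n) KK :=
  Matrix.diagonal (Sum.elim (fun _ => (phm X + psm (aR n))⁻¹) (fun _ => (phm X)⁻¹))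

noncomputable def Umat (n : ℕ) : Matrix (ZMod n ⊕ ZMod n) (Fin 3) KK :=
  Matrix.of (Sum.elim
    (fun i => ![psm (aR n), if i = 0 then 1 else 0,
        if i = 0 then psm (aR n) - psm (bR n) else psm (bR n) - psm (aR n)])
    (fun _ => ![0, 0, psm (cR n)]))

noncomputable def Vmat (n : ℕ) : Matrix (Fin 3) (ZMod n ⊕ ZMod n) KK :=
  Matrix.of fun k => Sum.elim
    (fun i => ![(1:KK), psm (bR n) - psm (aR n), if i = 0 then 1 else 0] k)
    (fun _ => ![(0:KK), psm (cR n), 0] k)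

lemma detD (n : ℕ) [NeZero n] :
    (Dmat n).det = (phm X + psm (aR n))^n * (phm X)^n := by
  rw [Dmat, Matrix.det_diagonal, Fintype.prod_sum_type]
  simp [Finset.prod_const, ZMod.card]

lemma tK_ne (n : ℕ) : phm X ≠ 0 := by
  rw [phm, ne_eq, map_eq_zero_iff _ (IsFractionRing.injective (Polynomial ℝ) KK)]
  exact X_ne_zero

lemma taK_ne (n : ℕ) : phm X + psm (aR n) ≠ 0 := by
  have : phm X + psm (aR n) = phm (X + C (aR n)) := by rw [map_add]; rfl
  rw [this, phm, ne_eq, map_eq_zero_iff _ (IsFractionRing.injective (Polynomial ℝ) KK)]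
  exact X_add_C_ne_zero _

lemma DDinv (n : ℕ) [NeZero n] : Dmat n * DmatInv n = 1 := by
  rw [Dmat, DmatInv, Matrix.diagonal_mul_diagonal, ← Matrix.diagonal_one]
  apply congrArg
  funext v
  cases v with
  | inl i => simp only [Sum.elim_inl]; exact mul_inv_cancel₀ (taK_ne n)
  | inr i => simp only [Sum.elim_inr]; exact mul_inv_cancel₀ (tK_ne n)

lemma sum_if_zero (n : ℕ) [NeZero n] (hn : 3 ≤ n) (u v : KK) :
    ∑ i : ZMod n, (if i = 0 then u else v) = u + ((n:KK) - 1) * v := by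
  rw [Finset.sum_ite]
  have h1 : Finset.filter (fun i : ZMod n => i = 0) Finset.univ = {0} := by
    ext i; simp
  have h2 : Finset.filter (fun i : ZMod n => ¬ i = 0) Finset.univ =
      Finset.univ.erase 0 := by
    ext i; simp [Finset.mem_erase]
  rw [h1, h2]
  simp only [Finset.sum_const, Finset.card_singleton,
    Finset.card_erase_of_mem (Finset.mem_univ _), Finset.card_univ, ZMod.card, nsmul_eq_mul]
  push_cast [Nat.cast_sub (show 1 ≤ n by omega)]
  ring

section entries
variable [NeZero n]

lemma cast1 (hn : 3 ≤ n) : ((n - 1 : ℕ) : ℝ) = (n:ℝ) - 1 := by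
  push_cast [Nat.cast_sub (show 1 ≤ n by omega)]; ring

lemma cast2 (hn : 3 ≤ n) : ((2*n - 1 : ℕ) : ℝ) = 2*(n:ℝ) - 1 := by
  push_cast [Nat.cast_sub (show 1 ≤ 2*n by omega)]; ring

lemma S_diag {V : Type*} (G : SimpleGraph V) (v : V) : somborMatrix G v v = 0 := by
  simp [somborMatrix]

lemma S_rr (hn : 3 ≤ n) (hodd : Odd n) {i j : ZMod n} (hi : i ≠ 0) (hj : j ≠ 0) (hij : i ≠ j) :
    somborMatrix (commutingGraph (DihedralGroup n)) (r i) (r j) = aR n := by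
  rw [somborMatrix, Matrix.of_apply, if_pos (adj_rr.mpr hij), sdeg_r hodd hi, sdeg_r hodd hj,
    cast1 hn]
  rw [show ((n:ℝ)-1)^2 + ((n:ℝ)-1)^2 = 2*((n:ℝ)-1)^2 by ring,
    Real.sqrt_mul (by norm_num), Real.sqrt_sq (by
      have : (3:ℝ) ≤ n := by exact_mod_cast hn
      linarith)]
  rfl

lemma S_r0r (hn : 3 ≤ n) (hodd : Odd n) {j : ZMod n} (hj : j ≠ 0) :
    somborMatrix (commutingGraph (DihedralGroup n)) (r 0) (r j) = bR n := by
  rw [somborMatrix, Matrix.of_apply, if_pos (adj_rr.mpr (Ne.symm hj)), sdeg_r hodd hj,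
    sdeg_r0 hodd, cast1 hn, cast2 hn, bR]

lemma S_rr0 (hn : 3 ≤ n) (hodd : Odd n) {i : ZMod n} (hi : i ≠ 0) :
    somborMatrix (commutingGraph (DihedralGroup n)) (r i) (r 0) = bR n := by
  rw [somborMatrix, Matrix.of_apply, if_pos (adj_rr.mpr hi), sdeg_r hodd hi,
    sdeg_r0 hodd, cast1 hn, cast2 hn, bR, add_comm (((n:ℝ)-1)^2)]

lemma S_r0sr (hn : 3 ≤ n) (hodd : Odd n) (j : ZMod n) :
    somborMatrix (commutingGraph (DihedralGroup n)) (r 0) (sr j) = cR n := by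
  rw [somborMatrix, Matrix.of_apply, if_pos ((adj_rsr hodd).mpr rfl), sdeg_sr hodd,
    sdeg_r0 hodd, cast2 hn, cR]
  norm_num

lemma S_srr0 (hn : 3 ≤ n) (hodd : Odd n) (j : ZMod n) :
    somborMatrix (commutingGraph (DihedralGroup n)) (sr j) (r 0) = cR n := by
  rw [somborMatrix, Matrix.of_apply, if_pos ((adj_srr hodd).mpr rfl), sdeg_sr hodd,
    sdeg_r0 hodd, cast2 hn, cR]
  norm_num [add_comm]

lemma S_rsr0 (hn : 3 ≤ n) (hodd : Odd n) {i : ZMod n} (hi : i ≠ 0) (j : ZMod n) :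
    somborMatrix (commutingGraph (DihedralGroup n)) (r i) (sr j) = 0 := by
  rw [somborMatrix, Matrix.of_apply, if_neg]
  rw [adj_rsr hodd]; exact hi

lemma S_srr (hn : 3 ≤ n) (hodd : Odd n) {j : ZMod n} (hj : j ≠ 0) (i : ZMod n) :
    somborMatrix (commutingGraph (DihedralGroup n)) (sr i) (r j) = 0 := by
  rw [somborMatrix, Matrix.of_apply, if_neg]
  rw [adj_srr hodd]; exact hj

lemma S_srsr (hn : 3 ≤ n) (hodd : Odd n) (i j : ZMod n) :
    somborMatrix (commutingGraph (DihedralGroup n)) (sr i) (sr j) = 0 := by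
  rw [somborMatrix, Matrix.of_apply, if_neg (not_adj_srsr hodd)]

end entries

lemma decomp (n : ℕ) [NeZero n] (hn : 3 ≤ n) (hodd : Odd n) :
    ((Matrix.charmatrix (somborMatrix (commutingGraph (DihedralGroup n)))).map phm).submatrix
        (ee n) (ee n) = Dmat n - Umat n * Vmat n := by
  ext v w
  rw [Matrix.sub_apply, Matrix.submatrix_apply, Matrix.map_apply, Matrix.mul_apply,
    Fin.sum_univ_three]
  rcases v with i | i <;> rcases w with j | j
  · -- rotations
    by_cases hij : i = j
    · subst hij
      rw [show (ee n) (Sum.inl i) = r i from rfl, Matrix.charmatrix_apply_eq, S_diag]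
      by_cases hi : i = 0 <;>
        simp [Umat, Vmat, Dmat, Matrix.diagonal_apply, hi, map_sub, map_zero] <;> ring
    · rw [show (ee n) (Sum.inl i) = r i from rfl, show (ee n) (Sum.inl j) = r j from rfl,
        Matrix.charmatrix_apply_ne _ _ _ (by simp [hij])]
      by_cases hi : i = 0
      · subst hi
        have hj : j ≠ 0 := fun h => hij h.symm
        rw [S_r0r hn hodd hj]
        simp [Umat, Vmat, Dmat, Matrix.diagonal_apply, hj, Ne.symm hj, hij, map_neg]
      · by_cases hj : j = 0
        · subst hj
          rw [S_rr0 hn hodd hi]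
          simp [Umat, Vmat, Dmat, Matrix.diagonal_apply, hi, hij, map_neg]
        · rw [S_rr hn hodd hi hj hij]
          simp [Umat, Vmat, Dmat, Matrix.diagonal_apply, hi, hj, hij, map_neg]
  · -- r i, sr j
    rw [show (ee n) (Sum.inl i) = r i from rfl, show (ee n) (Sum.inr j) = sr j from rfl,
      Matrix.charmatrix_apply_ne _ _ _ (by simp)]
    by_cases hi : i = 0
    · subst hi
      rw [S_r0sr hn hodd]
      simp [Umat, Vmat, Dmat, Matrix.diagonal_apply, map_neg]
    · rw [S_rsr0 hn hodd hi]
      simp [Umat, Vmat, Dmat, Matrix.diagonal_apply, hi, map_neg, map_zero]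
  · -- sr i, r j
    rw [show (ee n) (Sum.inr i) = sr i from rfl, show (ee n) (Sum.inl j) = r j from rfl,
      Matrix.charmatrix_apply_ne _ _ _ (by simp)]
    by_cases hj : j = 0
    · subst hj
      rw [S_srr0 hn hodd]
      simp [Umat, Vmat, Dmat, Matrix.diagonal_apply, map_neg]
    · rw [S_srr hn hodd hj]
      simp [Umat, Vmat, Dmat, Matrix.diagonal_apply, hj, map_neg, map_zero]
  · -- sr sr
    rw [show (ee n) (Sum.inr i) = sr i from rfl, show (ee n) (Sum.inr j) = sr j from rfl]
    by_cases hij : i = j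
    · subst hij
      rw [Matrix.charmatrix_apply_eq, S_diag]
      simp [Umat, Vmat, Dmat, Matrix.diagonal_apply, map_sub, map_zero]
    · rw [Matrix.charmatrix_apply_ne _ _ _ (by simp [hij]), S_srsr hn hodd]
      simp [Umat, Vmat, Dmat, Matrix.diagonal_apply, hij, map_neg, map_zero]

lemma ite_ite_same {c : Prop} [Decidable c] {α : Type*} (a b d : α) :
    (if c then (if c then a else b) else d) = if c then a else d := by
  by_cases h : c <;> simp [h]

lemma ite_ite_same' {c : Prop} [Decidable c] {α : Type*} (a b d : α) :
    (if c then a else (if c then b else d)) = if c then a else d := by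
  by_cases h : c <;> simp [h]

set_option maxHeartbeats 2000000 in
lemma oneSubF (n : ℕ) [NeZero n] (hn : 3 ≤ n) :
    (1 : Matrix (Fin 3) (Fin 3) KK) - Vmat n * (DmatInv n * Umat n) =
    !![1 - (n:KK)*(phm X + psm rt2*((n:KK)-1))⁻¹*(psm rt2*((n:KK)-1)),
         -(phm X + psm rt2*((n:KK)-1))⁻¹,
         -((phm X + psm rt2*((n:KK)-1))⁻¹*((n:KK)-2)*(psm (bR n) - psm rt2*((n:KK)-1)));
       -((n:KK)*(psm (bR n) - psm rt2*((n:KK)-1))*(phm X + psm rt2*((n:KK)-1))⁻¹*(psm rt2*((n:KK)-1))),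
         1 - (psm (bR n) - psm rt2*((n:KK)-1))*(phm X + psm rt2*((n:KK)-1))⁻¹,
         -((psm (bR n) - psm rt2*((n:KK)-1))*(psm (bR n) - psm rt2*((n:KK)-1))*(phm X + psm rt2*((n:KK)-1))⁻¹*((n:KK)-2) + (n:KK)*(phm X)⁻¹*(psm (cR n))^2);
       -((phm X + psm rt2*((n:KK)-1))⁻¹*(psm rt2*((n:KK)-1))),
         -(phm X + psm rt2*((n:KK)-1))⁻¹,
         1 + (phm X + psm rt2*((n:KK)-1))⁻¹*(psm (bR n) - psm rt2*((n:KK)-1))] := by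
  have hA : psm (aR n) = psm rt2 * ((n:KK) - 1) := by
    rw [aR, map_mul, map_sub, map_natCast, map_one]
  ext k l
  rw [Matrix.sub_apply, Matrix.one_apply, Matrix.mul_apply, Fintype.sum_sum_type]
  simp only [DmatInv, Matrix.diagonal_mul, Matrix.diagonal_apply_eq, Sum.elim_inl, Sum.elim_inr,
    Umat, Vmat, Matrix.of_apply]
  fin_cases k <;> fin_cases l <;>
    simp [ite_ite_same, ite_ite_same', sum_if_zero n hn, ZMod.card, hA, mul_ite, ite_mul,
      Finset.sum_const, Matrix.cons_val_two, Matrix.tail_cons] <;>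
    ring


end Work

theorem stmt3 (n : ℕ) [NeZero n] (hn : 3 ≤ n) (hodd : Odd n) :
    somborCharpoly (commutingGraph (DihedralGroup n)) =
      (X + C (((n : ℝ) - 1) * rt2)) ^ (n - 2) * X ^ (n - 1) *
        (X ^ 3 + C (rt2 * (3 * (n : ℝ) - (n : ℝ) ^ 2 - 2)) * X ^ 2 +
          C (15 * (n : ℝ) ^ 2 - 9 * (n : ℝ) ^ 3 - 10 * (n : ℝ) + 2) * X +
          C (rt2 * (4 * (n : ℝ) ^ 5 - 16 * (n : ℝ) ^ 4 + 22 * (n : ℝ) ^ 3 -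
              14 * (n : ℝ) ^ 2 + 4 * (n : ℝ)))) := by
  apply IsFractionRing.injective (Polynomial ℝ) Work.KK
  show Work.phm _ = Work.phm _
  have hA : Work.psm (Work.aR n) = Work.psm rt2 * ((n:Work.KK) - 1) := by
    rw [Work.aR, map_mul, map_sub, map_natCast, map_one]
  have htane : Work.phm X + Work.psm rt2 * ((n:Work.KK) - 1) ≠ 0 := by
    have := Work.taK_ne n; rwa [hA] at this
  have hrt : rt2 ^ 2 = 2 := Real.sq_sqrt (by norm_num)
  have hR : Work.psm rt2 ^ 2 = 2 := by
    rw [← map_pow, hrt, map_ofNat]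
  have hbr : Work.bR n ^ 2 = 5*(n:ℝ)^2 - 6*(n:ℝ) + 2 := by
    rw [Work.bR, Real.sq_sqrt (by positivity)]; ring
  have hcr : Work.cR n ^ 2 = 4*(n:ℝ)^2 - 4*(n:ℝ) + 2 := by
    rw [Work.cR, Real.sq_sqrt (by positivity)]; ring
  have hb : Work.psm (Work.bR n) ^ 2 = 5*(n:Work.KK)^2 - 6*(n:Work.KK) + 2 := by
    rw [← map_pow, hbr]
    simp [map_sub, map_add, map_mul, map_pow, map_natCast, map_ofNat]
  have hc : Work.psm (Work.cR n) ^ 2 = 4*(n:Work.KK)^2 - 4*(n:Work.KK) + 2 := by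
    rw [← map_pow, hcr]
    simp [map_sub, map_add, map_mul, map_pow, map_natCast, map_ofNat]
  have hu : (Work.phm X + Work.psm rt2 * ((n:Work.KK)-1)) *
      (Work.phm X + Work.psm rt2 * ((n:Work.KK)-1))⁻¹ = 1 := mul_inv_cancel₀ htane
  have hv : Work.phm X * (Work.phm X)⁻¹ = 1 := mul_inv_cancel₀ (Work.tK_ne n)
  have hkey := key_cubic (Work.phm X) (Work.psm rt2) (Work.psm (Work.bR n))
    (Work.psm (Work.cR n)) ((n:Work.KK)) ((Work.phm X + Work.psm rt2 * ((n:Work.KK)-1))⁻¹)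
    ((Work.phm X)⁻¹) hR hb hc hu hv
  rw [somborCharpoly, Matrix.charpoly, RingHom.map_det, RingHom.mapMatrix_apply,
    ← Matrix.det_submatrix_equiv_self (Work.ee n), Work.decomp n hn hodd]
  have hfac : Work.Dmat n - Work.Umat n * Work.Vmat n =
      Work.Dmat n * (1 - (Work.DmatInv n * Work.Umat n) * Work.Vmat n) := by
    rw [Matrix.mul_sub, Matrix.mul_one, ← Matrix.mul_assoc, ← Matrix.mul_assoc,
      Work.DDinv n, Matrix.one_mul]
  rw [hfac, Matrix.det_mul, Matrix.det_one_sub_mul_comm, Work.detD n, Work.oneSubF n hn, hA]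
  have e1 : (Work.phm X + Work.psm rt2 * ((n:Work.KK)-1))^n =
      (Work.phm X + Work.psm rt2 * ((n:Work.KK)-1))^(n-2) *
      (Work.phm X + Work.psm rt2 * ((n:Work.KK)-1))^2 := by
    rw [← pow_add]; congr 1; omega
  have e2 : (Work.phm X)^n = (Work.phm X)^(n-1) * Work.phm X := by
    conv_lhs => rw [show n = (n-1) + 1 by omega]
    rw [pow_succ]
  have hRHS : Work.phm ((X + C (((n : ℝ) - 1) * rt2)) ^ (n - 2) * X ^ (n - 1) *
        (X ^ 3 + C (rt2 * (3 * (n : ℝ) - (n : ℝ) ^ 2 - 2)) * X ^ 2 +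
          C (15 * (n : ℝ) ^ 2 - 9 * (n : ℝ) ^ 3 - 10 * (n : ℝ) + 2) * X +
          C (rt2 * (4 * (n : ℝ) ^ 5 - 16 * (n : ℝ) ^ 4 + 22 * (n : ℝ) ^ 3 -
              14 * (n : ℝ) ^ 2 + 4 * (n : ℝ))))) =
      (Work.phm X + Work.psm rt2 * ((n:Work.KK)-1))^(n-2) * (Work.phm X)^(n-1) *
        ((Work.phm X)^3 + Work.psm rt2 * (3*(n:Work.KK) - (n:Work.KK)^2 - 2) * (Work.phm X)^2 +
         (15*(n:Work.KK)^2 - 9*(n:Work.KK)^3 - 10*(n:Work.KK) + 2) * Work.phm X +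
         Work.psm rt2 * (4*(n:Work.KK)^5 - 16*(n:Work.KK)^4 + 22*(n:Work.KK)^3 -
            14*(n:Work.KK)^2 + 4*(n:Work.KK))) := by
    simp only [map_mul, map_pow, map_add, Work.phm_C, map_sub, map_natCast, map_ofNat, map_one]
    ring
  rw [hRHS, e1, e2]
  calc (Work.phm X + Work.psm rt2 * ((n:Work.KK)-1))^(n-2) *
        (Work.phm X + Work.psm rt2 * ((n:Work.KK)-1))^2 *
        ((Work.phm X)^(n-1) * Work.phm X) * Matrix.det _ =
      (Work.phm X + Work.psm rt2 * ((n:Work.KK)-1))^(n-2) * (Work.phm X)^(n-1) *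
        ((Work.phm X + Work.psm rt2 * ((n:Work.KK)-1))^2 * Work.phm X * Matrix.det _) := by
        ring
    _ = _ := by rw [hkey]
end

section
/- For every odd integer n ≥ 3, the Sombor characteristic polynomial of the order super commuting graph Δ^o(D_{2n}) of the dihedral group D_{2n} equals (x + (n−1)·√2)^{n−2} · (x + n·√2)^{n−1} · [ x·(x − (n−1)(n−2)·√2)·(x − n(n−1)·√2) − (n−1)(5n² − 6n + 2)·(x − n(n−1)·√2) − n(5n² − 4n + 1)·(x − (n−1)(n−2)·√2) ]. -/
open Polynomial
open scoped Classical

open Matrix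

section General2

variable {F : Type*} [Field F] {α β : Type*} [Fintype α] [Fintype β]
  [DecidableEq α] [DecidableEq β]

/-- class function -/
def cl3 : α ⊕ β ⊕ Unit → Fin 3 := Sum.elim (fun _ => 0) (Sum.elim (fun _ => 1) (fun _ => 2))

noncomputable def Umat (F : Type*) [Field F] (α β : Type*) : Matrix (α ⊕ β ⊕ Unit) (Fin 3) F :=
  Matrix.of fun i t => if cl3 i = t then 1 else 0

omit [DecidableEq α] [DecidableEq β] in
lemma mul_Umat_transpose (B : Matrix (Fin 3) (Fin 3) F) (s : Fin 3) (j : α ⊕ β ⊕ Unit) :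
    (B * (Umat F α β)ᵀ) s j = B s (cl3 j) := by
  classical
  simp only [Matrix.mul_apply, Umat, transpose_apply, Matrix.of_apply]
  rw [Finset.sum_eq_single (cl3 j)] <;> simp +contextual [eq_comm]

omit [DecidableEq α] [DecidableEq β] in
lemma Umat_mul_apply (B : Matrix (Fin 3) (α ⊕ β ⊕ Unit) F) (i : α ⊕ β ⊕ Unit)
    (j : α ⊕ β ⊕ Unit) : ((Umat F α β) * B) i j = B (cl3 i) j := by
  classical
  simp only [Matrix.mul_apply, Umat, Matrix.of_apply]
  rw [Finset.sum_eq_single (cl3 i)] <;> simp +contextual [eq_comm]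

lemma scalar_aux (a b c d x M K : F) (hx : x ≠ 0) (hxa : x + a ≠ 0) (hxb : x + b ≠ 0) :
    x * (x - a*(M-1)) * (x - b*(K-1)) - c^2*M*(x - b*(K-1)) - d^2*K*(x - a*(M-1))
    = ((x+a)*((x+b)*x)) * ((1 - a*M*(x+a)⁻¹) * ((1 - b*K*(x+b)⁻¹) - d*x⁻¹ * (d*K*(x+b)⁻¹))
        - c*x⁻¹ * (c*M*(x+a)⁻¹ * (1 - b*K*(x+b)⁻¹))) := by
  have hp : (x+a) * (x+a)⁻¹ = 1 := mul_inv_cancel₀ hxa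
  have hq : (x+b) * (x+b)⁻¹ = 1 := mul_inv_cancel₀ hxb
  have hs : x * x⁻¹ = 1 := mul_inv_cancel₀ hx
  have hu : (x+a) * (1 - a*M*(x+a)⁻¹) = x - a*(M-1) := by linear_combination (-(a*M)) * hp
  have hv : (x+b) * (1 - b*K*(x+b)⁻¹) = x - b*(K-1) := by linear_combination (-(b*K)) * hq
  have h1 : (x+a)*(x+b)*x*((1 - a*M*(x+a)⁻¹)*(1 - b*K*(x+b)⁻¹))
      = x*(x - a*(M-1))*(x - b*(K-1)) := by
    linear_combination (x*((x+b)*(1 - b*K*(x+b)⁻¹)))*hu + (x*(x - a*(M-1)))*hv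
  have h2 : (x+a)*(x+b)*x*((1 - a*M*(x+a)⁻¹)*(d*x⁻¹*(d*K*(x+b)⁻¹)))
      = d^2*K*(x - a*(M-1)) := by
    linear_combination (d^2*K*((x+b)*(x+b)⁻¹)*(x*x⁻¹))*hu
      + (d^2*K*(x - a*(M-1))*(x*x⁻¹))*hq + (d^2*K*(x - a*(M-1)))*hs
  have h3 : (x+a)*(x+b)*x*(c*x⁻¹*(c*M*(x+a)⁻¹*(1 - b*K*(x+b)⁻¹)))
      = c^2*M*(x - b*(K-1)) := by
    linear_combination (c^2*M*((x+a)*(x+a)⁻¹)*(x*x⁻¹))*hv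
      + (c^2*M*(x - b*(K-1))*(x*x⁻¹))*hp + (c^2*M*(x - b*(K-1)))*hs
  linear_combination h2 + h3 - h1

set_option maxHeartbeats 1000000 in
theorem det_structured (a b c d x : F) (hx : x ≠ 0) (hxa : x + a ≠ 0) (hxb : x + b ≠ 0)
    (hα : 1 ≤ Fintype.card α) (hβ : 1 ≤ Fintype.card β) :
    (Matrix.diagonal (fun i => (![x+a, x+b, x] : Fin 3 → F) (cl3 i))
      - Umat F α β * (!![a,0,c;0,b,d;c,d,0] * (Umat F α β)ᵀ)).det
    = (x+a)^(Fintype.card α - 1) * (x+b)^(Fintype.card β - 1) *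
      (x * (x - a*((Fintype.card α : F)-1)) * (x - b*((Fintype.card β : F)-1))
        - c^2*(Fintype.card α : F)*(x - b*((Fintype.card β : F)-1))
        - d^2*(Fintype.card β : F)*(x - a*((Fintype.card α : F)-1))) := by
  classical
  set m : ℕ := Fintype.card α
  set k : ℕ := Fintype.card β
  set gv : Fin 3 → F := ![x+a, x+b, x] with hgv
  have hgv0 : ∀ t, gv t ≠ 0 := by
    intro t; fin_cases t <;> simpa [hgv]
  set S : Matrix (Fin 3) (Fin 3) F := !![a,0,c;0,b,d;c,d,0] with hS
  set G : Matrix (α ⊕ β ⊕ Unit) (α ⊕ β ⊕ Unit) F := Matrix.diagonal (fun i => gv (cl3 i)) with hG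
  set G' : Matrix (α ⊕ β ⊕ Unit) (α ⊕ β ⊕ Unit) F :=
    Matrix.diagonal (fun i => (gv (cl3 i))⁻¹) with hG'
  have hGG' : G * G' = 1 := by
    rw [hG, hG', diagonal_mul_diagonal]
    convert Matrix.diagonal_one
    exact mul_inv_cancel₀ (hgv0 _)
  have key : G - (Umat F α β) * (S * (Umat F α β)ᵀ) = G * (1 - (G' * (Umat F α β)) * (S * (Umat F α β)ᵀ)) := by
    rw [Matrix.mul_sub, Matrix.mul_one]
    congr 1
    rw [← Matrix.mul_assoc G, ← Matrix.mul_assoc G, hGG', Matrix.one_mul]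
  rw [key, Matrix.det_mul, Matrix.det_one_sub_mul_comm]
  -- compute the 3×3 matrix T := (S * (Umat F α β)ᵀ) * (G' * (Umat F α β))
  have hT : (S * (Umat F α β)ᵀ) * (G' * (Umat F α β)) =
      !![a*m*(x+a)⁻¹, 0, c*x⁻¹; 0, b*k*(x+b)⁻¹, d*x⁻¹; c*m*(x+a)⁻¹, d*k*(x+b)⁻¹, 0] := by
    ext s t
    rw [Matrix.mul_apply]
    have hGU : ∀ (i : α ⊕ β ⊕ Unit) (t : Fin 3),
        (G' * (Umat F α β)) i t = (gv (cl3 i))⁻¹ * (if cl3 i = t then 1 else 0) := by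
      intro i t
      rw [hG', Matrix.diagonal_mul]
      rfl
    simp only [hGU, mul_Umat_transpose]
    rw [Fintype.sum_sum_type, Fintype.sum_sum_type]
    have h0 : ∀ z : α, cl3 (Sum.inl z : α ⊕ β ⊕ Unit) = 0 := fun _ => rfl
    have h1 : ∀ z : β, cl3 (Sum.inr (Sum.inl z) : α ⊕ β ⊕ Unit) = 1 := fun _ => rfl
    have h2 : ∀ z : Unit, cl3 (Sum.inr (Sum.inr z) : α ⊕ β ⊕ Unit) = 2 := fun _ => rfl
    simp only [h0, h1, h2, Finset.sum_const, Finset.card_univ, nsmul_eq_mul,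
      Fintype.card_unit, Nat.cast_one, one_mul]
    fin_cases s <;> fin_cases t <;> (try simp [hS, hgv, Fin.ext_iff]) <;> (try ring)
  rw [hT]
  have hdetG : G.det = (x+a)^m * (x+b)^k * x := by
    rw [hG, Matrix.det_diagonal, Fintype.prod_sum_type, Fintype.prod_sum_type]
    have h0 : ∀ z : α, cl3 (Sum.inl z : α ⊕ β ⊕ Unit) = 0 := fun _ => rfl
    have h1 : ∀ z : β, cl3 (Sum.inr (Sum.inl z) : α ⊕ β ⊕ Unit) = 1 := fun _ => rfl
    simp only [h0, h1, Finset.prod_const, Finset.card_univ]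
    have h2 : (∏ z : Unit, gv (cl3 (Sum.inr (Sum.inr z) : α ⊕ β ⊕ Unit))) = x := by
      rw [Fintype.prod_unique]; simp [hgv]; rfl
    rw [h2]
    simp only [hgv]
    norm_num
    ring
  rw [hdetG]
  have hdet3 : (1 - !![a*m*(x+a)⁻¹, 0, c*x⁻¹; 0, b*k*(x+b)⁻¹, d*x⁻¹; c*m*(x+a)⁻¹, d*k*(x+b)⁻¹, 0]).det
      = (1 - a*m*(x+a)⁻¹) * ((1 - b*k*(x+b)⁻¹) - d*x⁻¹ * (d*k*(x+b)⁻¹))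
        - c*x⁻¹ * (c*m*(x+a)⁻¹ * (1 - b*k*(x+b)⁻¹)) := by
    rw [Matrix.det_fin_three]
    simp [Matrix.one_apply, Fin.ext_iff]
    ring
  rw [hdet3]
  have hm : (x+a)^m = (x+a)^(m-1) * (x+a) := by
    conv_lhs => rw [← Nat.sub_add_cancel hα]
    rw [pow_succ]
  have hk : (x+b)^k = (x+b)^(k-1) * (x+b) := by
    conv_lhs => rw [← Nat.sub_add_cancel hβ]
    rw [pow_succ]
  rw [hm, hk, scalar_aux a b c d x (m:F) (k:F) hx hxa hxb]
  ring

end General2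

section Dihedral
open DihedralGroup

variable {n : ℕ} [NeZero n]

lemma zmod_two_mul_eq_zero (hodd : Odd n) {i : ZMod n} (h : i + i = 0) : i = 0 := by
  have h2 : IsUnit (2 : ZMod n) := by
    rw [show ((2:ZMod n)) = ((2:ℕ) : ZMod n) by norm_num, ZMod.isUnit_iff_coprime]
    exact hodd.coprime_two_left
  exact h2.mul_left_cancel (by rw [two_mul, h, mul_zero])

lemma orderOf_r_ne_two (hodd : Odd n) (i : ZMod n) : orderOf (r i : DihedralGroup n) ≠ 2 := by
  intro h
  have hdvd : orderOf (r i : DihedralGroup n) ∣ n := by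
    rw [orderOf_r]
    exact Nat.div_dvd_of_dvd (Nat.gcd_dvd_left _ _)
  rw [h] at hdvd
  exact (Nat.not_even_iff_odd.mpr hodd) (even_iff_two_dvd.mpr hdvd)

lemma sr_not_commute_r (hodd : Odd n) (k l : ZMod n) (hk : k ≠ 0) :
    ¬ (r k * sr l = sr l * r k : Prop) := by
  intro h
  rw [r_mul_sr, sr_mul_r] at h
  have : l - k = l + k := by injection h
  apply hk
  apply zmod_two_mul_eq_zero hodd
  linear_combination -this

/-- characterization of adjacency -/
lemma adj_iff (hodd : Odd n) (x y : DihedralGroup n) :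
    (superGraph (commutingGraph (DihedralGroup n)) (orderRel (DihedralGroup n))
      (orderRel_equivalence (DihedralGroup n))).Adj x y ↔
    x ≠ y ∧ ((∃ i j, x = r i ∧ y = r j) ∨ (∃ i j, x = sr i ∧ y = sr j)
      ∨ x = r 0 ∨ y = r 0) := by
  have hr1 : ∀ i : ZMod n, (r i : DihedralGroup n) = 1 ↔ i = 0 := by
    intro i; rw [one_def]; exact ⟨fun h => by injection h, fun h => by rw [h]⟩
  constructor
  · rintro ⟨hne, hrel⟩
    refine ⟨hne, ?_⟩
    match x, y with
    | r i, r j => exact Or.inl ⟨i, j, rfl, rfl⟩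
    | sr i, sr j => exact Or.inr (Or.inl ⟨i, j, rfl, rfl⟩)
    | r i, sr j =>
      refine Or.inr (Or.inr (Or.inl ?_))
      by_contra hi0
      have hi : i ≠ 0 := fun h => hi0 (by rw [h])
      rcases hrel with horder | ⟨x', y', hx', hy', hne', hcomm⟩
      · exact (orderOf_r_ne_two hodd i) (horder.trans (orderOf_sr j))
      · match x', y' with
        | sr k, _ => exact (orderOf_r_ne_two hodd i) (hx'.trans (orderOf_sr k))
        | r k, r l => exact (orderOf_r_ne_two hodd l) (hy'.symm.trans (orderOf_sr j))
        | r k, sr l =>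
          have hk : k ≠ 0 := by
            intro h
            subst h
            rw [orderRel] at hx'
            rw [(orderOf_eq_one_iff).mpr ((hr1 0).mpr rfl)] at hx'
            exact hi ((hr1 i).mp (orderOf_eq_one_iff.mp hx'))
          exact sr_not_commute_r hodd k l hk hcomm
    | sr i, r j =>
      refine Or.inr (Or.inr (Or.inr ?_))
      by_contra hj0
      have hj : j ≠ 0 := fun h => hj0 (by rw [h])
      rcases hrel with horder | ⟨x', y', hx', hy', hne', hcomm⟩
      · exact (orderOf_r_ne_two hodd j) (horder.symm.trans (orderOf_sr i))
      · match x', y' with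
        | r l, _ => exact (orderOf_r_ne_two hodd l) (hx'.symm.trans (orderOf_sr i))
        | sr l, sr k => exact (orderOf_r_ne_two hodd j) (hy'.trans (orderOf_sr k))
        | sr l, r k =>
          have hk : k ≠ 0 := by
            intro h
            subst h
            rw [orderRel] at hy'
            rw [(orderOf_eq_one_iff).mpr ((hr1 0).mpr rfl)] at hy'
            exact hj ((hr1 j).mp (orderOf_eq_one_iff.mp hy'))
          exact sr_not_commute_r hodd k l hk hcomm.symm
  · rintro ⟨hne, (⟨i, j, rfl, rfl⟩ | ⟨i, j, rfl, rfl⟩ | rfl | rfl)⟩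
    · exact ⟨hne, Or.inr ⟨r i, r j, rfl, rfl, hne, by rw [r_mul_r, r_mul_r, add_comm]⟩⟩
    · refine ⟨hne, Or.inl ?_⟩
      show orderOf _ = orderOf _
      rw [orderOf_sr, orderOf_sr]
    · exact ⟨hne, Or.inr ⟨r 0, y, rfl, rfl, hne, by rw [← one_def, one_mul, mul_one]⟩⟩
    · exact ⟨hne, Or.inr ⟨x, r 0, rfl, rfl, hne, by rw [← one_def, one_mul, mul_one]⟩⟩

lemma r_inj : Function.Injective (r : ZMod n → DihedralGroup n) :=
  fun a b h => by injection h

lemma sr_inj : Function.Injective (sr : ZMod n → DihedralGroup n) :=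
  fun a b h => by injection h

/-- The graph in question. -/
noncomputable def myGraph (n : ℕ) : SimpleGraph (DihedralGroup n) :=
  superGraph (commutingGraph (DihedralGroup n)) (orderRel (DihedralGroup n))
    (orderRel_equivalence (DihedralGroup n))

lemma sdeg_r0 (hodd : Odd n) : sdeg (myGraph n) (r 0) = 2 * n - 1 := by
  have hset : {u | (myGraph n).Adj (r 0) u} = {(r 0 : DihedralGroup n)}ᶜ := by
    ext u
    simp only [Set.mem_setOf_eq, Set.mem_compl_iff, Set.mem_singleton_iff, myGraph,
      adj_iff hodd]
    constructor
    · rintro ⟨hne, -⟩ h; exact hne h.symm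
    · intro h; exact ⟨fun hh => h hh.symm, by tauto⟩
  rw [sdeg, hset, Set.compl_eq_univ_diff,
    Set.ncard_diff_singleton_of_mem (Set.mem_univ _), Set.ncard_univ, DihedralGroup.nat_card]

lemma sdeg_r (hodd : Odd n) (i : ZMod n) (hi : i ≠ 0) :
    sdeg (myGraph n) (r i) = n - 1 := by
  have hset : {u | (myGraph n).Adj (r i) u} = Set.range (r : ZMod n → _) \ {r i} := by
    ext u
    simp only [Set.mem_setOf_eq, Set.mem_diff, Set.mem_range, Set.mem_singleton_iff, myGraph,
      adj_iff hodd]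
    constructor
    · rintro ⟨hne, (⟨i', j, hx, rfl⟩ | ⟨i', j, hx, rfl⟩ | hx | rfl)⟩
      · exact ⟨⟨j, rfl⟩, fun h => hne h.symm⟩
      · exact absurd hx (by simp)
      · exact absurd hx (fun h => hi (r_inj h))
      · exact ⟨⟨0, rfl⟩, fun h => hne h.symm⟩
    · rintro ⟨⟨j, rfl⟩, hne⟩
      exact ⟨fun h => hne h.symm, Or.inl ⟨i, j, rfl, rfl⟩⟩
  rw [sdeg, hset, Set.ncard_diff_singleton_of_mem (Set.mem_range_self i), ← Set.image_univ,
    Set.ncard_image_of_injective _ r_inj, Set.ncard_univ, Nat.card_zmod]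

lemma sdeg_sr (hodd : Odd n) (i : ZMod n) : sdeg (myGraph n) (sr i) = n := by
  have h0 : (r 0 : DihedralGroup n) ∉ Set.range (sr : ZMod n → _) \ {sr i} := by
    rintro ⟨⟨j, hj⟩, -⟩; exact absurd hj (by intro h; injection h)
  have hset : {u | (myGraph n).Adj (sr i) u} =
      (Set.range (sr : ZMod n → _) \ {sr i}) ∪ {r 0} := by
    ext u
    simp only [Set.mem_setOf_eq, Set.mem_union, Set.mem_diff, Set.mem_range,
      Set.mem_singleton_iff, myGraph, adj_iff hodd]
    constructor
    · rintro ⟨hne, (⟨i', j, hx, rfl⟩ | ⟨i', j, hx, rfl⟩ | hx | rfl)⟩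
      · exact absurd hx (by simp)
      · exact Or.inl ⟨⟨j, rfl⟩, fun h => hne h.symm⟩
      · exact absurd hx (by intro h; injection h)
      · exact Or.inr rfl
    · rintro (⟨⟨j, rfl⟩, hne⟩ | rfl)
      · exact ⟨fun h => hne h.symm, Or.inr (Or.inl ⟨i, j, rfl, rfl⟩)⟩
      · exact ⟨(by intro h; injection h), Or.inr (Or.inr (Or.inr rfl))⟩
  rw [sdeg, hset, Set.ncard_union_eq (by simpa using h0) (Set.toFinite _) (Set.toFinite _),
    Set.ncard_diff_singleton_of_mem (Set.mem_range_self i), ← Set.image_univ,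
    Set.ncard_image_of_injective _ sr_inj, Set.ncard_univ, Nat.card_zmod, Set.ncard_singleton]
  have : 1 ≤ n := Nat.one_le_iff_ne_zero.mpr (NeZero.ne n)
  omega

/-- Reindexing equivalence. -/
def dihedralEquiv (n : ℕ) [NeZero n] :
    DihedralGroup n ≃ ({i : ZMod n // i ≠ (0 : ZMod n)} ⊕ (ZMod n) ⊕ Unit) where
  toFun x := match x with
    | r i => if h : i = 0 then Sum.inr (Sum.inr ()) else Sum.inl ⟨i, h⟩
    | sr i => Sum.inr (Sum.inl i)
  invFun y := match y with
    | Sum.inl z => r z.1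
    | Sum.inr (Sum.inl i) => sr i
    | Sum.inr (Sum.inr _) => r 0
  left_inv := by
    rintro (i | i)
    · by_cases h : i = 0 <;> simp [h]
    · rfl
  right_inv := by
    rintro (⟨i, h⟩ | i | u)
    · simp [h]
    · rfl
    · simp

noncomputable def aR (n : ℕ) : ℝ := ((n:ℝ) - 1) * rt2
noncomputable def bR (n : ℕ) : ℝ := (n:ℝ) * rt2
noncomputable def cR (n : ℕ) : ℝ := Real.sqrt (5*(n:ℝ)^2 - 6*(n:ℝ) + 2)
noncomputable def dR (n : ℕ) : ℝ := Real.sqrt (5*(n:ℝ)^2 - 4*(n:ℝ) + 1)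

/-- The explicit structured matrix. -/
noncomputable def NR (n : ℕ) :
    Matrix ({i : ZMod n // i ≠ (0 : ZMod n)} ⊕ (ZMod n) ⊕ Unit)
      ({i : ZMod n // i ≠ (0 : ZMod n)} ⊕ (ZMod n) ⊕ Unit) ℝ :=
  Matrix.of fun u v => if u = v then 0 else
    (!![aR n, 0, cR n; 0, bR n, dR n; cR n, dR n, 0]) (cl3 u) (cl3 v)

lemma myGraph_adj (hodd : Odd n) (x y : DihedralGroup n) :
    (myGraph n).Adj x y ↔
    x ≠ y ∧ ((∃ i j, x = r i ∧ y = r j) ∨ (∃ i j, x = sr i ∧ y = sr j)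
      ∨ x = r 0 ∨ y = r 0) := adj_iff hodd x y

lemma sqrt_two_sq (t : ℝ) (ht : 0 ≤ t) : Real.sqrt (t^2 + t^2) = t * rt2 := by
  rw [show t^2 + t^2 = t^2 * 2 by ring, Real.sqrt_mul (by positivity), Real.sqrt_sq ht, rt2]

lemma reindex_eq (hn : 3 ≤ n) (hodd : Odd n) :
    Matrix.reindex (dihedralEquiv n) (dihedralEquiv n) (somborMatrix (myGraph n)) = NR n := by
  have h1n : (1:ℝ) ≤ (n:ℝ) := by
    have : 1 ≤ n := by omega
    exact_mod_cast this
  have hc0 : ((sdeg (myGraph n) (r 0) : ℕ) : ℝ) = 2*(n:ℝ) - 1 := by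
    rw [sdeg_r0 hodd, Nat.cast_sub (by omega)]; push_cast; ring
  have hcr : ∀ i : ZMod n, i ≠ 0 → ((sdeg (myGraph n) (r i) : ℕ) : ℝ) = (n:ℝ) - 1 := by
    intro i hi
    rw [sdeg_r hodd i hi, Nat.cast_sub (by omega)]; push_cast; ring
  have hcs : ∀ i : ZMod n, ((sdeg (myGraph n) (sr i) : ℕ) : ℝ) = (n:ℝ) := by
    intro i; rw [sdeg_sr hodd i]
  -- adjacency facts
  have hadj : ∀ x y, (myGraph n).Adj x y ↔ _ := fun x y => adj_iff hodd x y
  ext u v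
  rw [Matrix.reindex_apply, Matrix.submatrix_apply]
  rcases u with ⟨i, hi⟩ | j | w <;> rcases v with ⟨i', hi'⟩ | j' | w'
  · -- r i vs r i'
    show somborMatrix (myGraph n) (r i) (r i') = _
    by_cases hij : i = i'
    · subst hij
      simp [NR, somborMatrix, (myGraph n).loopless]
    · have hadj' : (myGraph n).Adj (r i) (r i') := by
        rw [myGraph_adj hodd]
        exact ⟨fun h => hij (r_inj h), Or.inl ⟨i, i', rfl, rfl⟩⟩
      simp only [somborMatrix, Matrix.of_apply, if_pos hadj', NR,
        if_neg (by simp [Subtype.ext_iff, hij] : ¬(Sum.inl ⟨i,hi⟩ : {i : ZMod n // i ≠ (0 : ZMod n)} ⊕ (ZMod n) ⊕ Unit) = Sum.inl ⟨i',hi'⟩)]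
      rw [hcr i hi, hcr i' hi']
      show Real.sqrt _ = !![aR n, 0, cR n; 0, bR n, dR n; cR n, dR n, 0] 0 0
      rw [sqrt_two_sq _ (by linarith)]
      simp [aR]
  · -- r i vs sr j'
    show somborMatrix (myGraph n) (r i) (sr j') = _
    have hnadj : ¬ (myGraph n).Adj (r i) (sr j') := by
      rw [myGraph_adj hodd]
      rintro ⟨hne, (⟨a, b, ha, hb⟩ | ⟨a, b, ha, hb⟩ | ha | hb)⟩
      · exact absurd hb (by simp)
      · exact absurd ha (by simp)
      · exact hi (r_inj ha)
      · exact absurd hb (by intro h; injection h)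
    simp only [somborMatrix, Matrix.of_apply, if_neg hnadj, NR]
    show (0:ℝ) = !![aR n, 0, cR n; 0, bR n, dR n; cR n, dR n, 0] 0 1
    simp
  · -- r i vs r 0
    show somborMatrix (myGraph n) (r i) (r 0) = _
    have hadj' : (myGraph n).Adj (r i) (r 0) := by
      rw [myGraph_adj hodd]
      exact ⟨fun h => hi (r_inj h), Or.inl ⟨i, 0, rfl, rfl⟩⟩
    simp only [somborMatrix, Matrix.of_apply, if_pos hadj', NR]
    rw [hcr i hi, hc0]
    show Real.sqrt _ = !![aR n, 0, cR n; 0, bR n, dR n; cR n, dR n, 0] 0 2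
    have : ((n:ℝ)-1)^2 + (2*(n:ℝ)-1)^2 = 5*(n:ℝ)^2 - 6*(n:ℝ) + 2 := by ring
    rw [this]
    simp [cR]
  · -- sr j vs r i'
    show somborMatrix (myGraph n) (sr j) (r i') = _
    have hnadj : ¬ (myGraph n).Adj (sr j) (r i') := by
      rw [myGraph_adj hodd]
      rintro ⟨hne, (⟨a, b, ha, hb⟩ | ⟨a, b, ha, hb⟩ | ha | hb)⟩
      · exact absurd ha (by simp)
      · exact absurd hb (by simp)
      · exact absurd ha (by intro h; injection h)
      · exact hi' (r_inj hb)
    simp only [somborMatrix, Matrix.of_apply, if_neg hnadj, NR]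
    show (0:ℝ) = !![aR n, 0, cR n; 0, bR n, dR n; cR n, dR n, 0] 1 0
    simp
  · -- sr j vs sr j'
    show somborMatrix (myGraph n) (sr j) (sr j') = _
    by_cases hij : j = j'
    · subst hij
      simp [NR, somborMatrix, (myGraph n).loopless]
    · have hadj' : (myGraph n).Adj (sr j) (sr j') := by
        rw [myGraph_adj hodd]
        exact ⟨fun h => hij (sr_inj h), Or.inr (Or.inl ⟨j, j', rfl, rfl⟩)⟩
      simp only [somborMatrix, Matrix.of_apply, if_pos hadj', NR,
        if_neg (by simp [hij] : ¬(Sum.inr (Sum.inl j) : {i : ZMod n // i ≠ (0 : ZMod n)} ⊕ (ZMod n) ⊕ Unit) = Sum.inr (Sum.inl j'))]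
      rw [hcs j, hcs j']
      show Real.sqrt _ = !![aR n, 0, cR n; 0, bR n, dR n; cR n, dR n, 0] 1 1
      rw [sqrt_two_sq _ (by linarith)]
      simp [bR]
  · -- sr j vs r 0
    show somborMatrix (myGraph n) (sr j) (r 0) = _
    have hadj' : (myGraph n).Adj (sr j) (r 0) := by
      rw [myGraph_adj hodd]
      exact ⟨(by intro h; injection h), Or.inr (Or.inr (Or.inr rfl))⟩
    simp only [somborMatrix, Matrix.of_apply, if_pos hadj', NR]
    rw [hcs j, hc0]
    show Real.sqrt _ = !![aR n, 0, cR n; 0, bR n, dR n; cR n, dR n, 0] 1 2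
    have : (n:ℝ)^2 + (2*(n:ℝ)-1)^2 = 5*(n:ℝ)^2 - 4*(n:ℝ) + 1 := by ring
    rw [this]
    simp [dR]
  · -- r 0 vs r i'
    show somborMatrix (myGraph n) (r 0) (r i') = _
    have hadj' : (myGraph n).Adj (r 0) (r i') := by
      rw [myGraph_adj hodd]
      exact ⟨fun h => hi' (r_inj h.symm), Or.inl ⟨0, i', rfl, rfl⟩⟩
    simp only [somborMatrix, Matrix.of_apply, if_pos hadj', NR]
    rw [hcr i' hi', hc0]
    show Real.sqrt _ = !![aR n, 0, cR n; 0, bR n, dR n; cR n, dR n, 0] 2 0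
    have : (2*(n:ℝ)-1)^2 + ((n:ℝ)-1)^2 = 5*(n:ℝ)^2 - 6*(n:ℝ) + 2 := by ring
    rw [this]
    simp [cR]
  · -- r 0 vs sr j'
    show somborMatrix (myGraph n) (r 0) (sr j') = _
    have hadj' : (myGraph n).Adj (r 0) (sr j') := by
      rw [myGraph_adj hodd]
      exact ⟨(by intro h; injection h), Or.inr (Or.inr (Or.inl rfl))⟩
    simp only [somborMatrix, Matrix.of_apply, if_pos hadj', NR]
    rw [hcs j', hc0]
    show Real.sqrt _ = !![aR n, 0, cR n; 0, bR n, dR n; cR n, dR n, 0] 2 1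
    have : (2*(n:ℝ)-1)^2 + (n:ℝ)^2 = 5*(n:ℝ)^2 - 4*(n:ℝ) + 1 := by ring
    rw [this]
    simp [dR]
  · -- r 0 vs r 0
    show somborMatrix (myGraph n) (r 0) (r 0) = _
    simp [NR, somborMatrix, (myGraph n).loopless]

end Dihedral
theorem stmt6 (n : ℕ) [NeZero n] (hn : 3 ≤ n) (hodd : Odd n) :
    somborCharpoly (superGraph (commutingGraph (DihedralGroup n))
        (orderRel (DihedralGroup n)) (orderRel_equivalence (DihedralGroup n))) =
      (X + C (((n : ℝ) - 1) * rt2)) ^ (n - 2) * (X + C ((n : ℝ) * rt2)) ^ (n - 1) *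
        (X * (X - C (((n : ℝ) - 1) * ((n : ℝ) - 2) * rt2)) *
            (X - C ((n : ℝ) * ((n : ℝ) - 1) * rt2)) -
          C (((n : ℝ) - 1) * (5 * (n : ℝ) ^ 2 - 6 * (n : ℝ) + 2)) *
            (X - C ((n : ℝ) * ((n : ℝ) - 1) * rt2)) -
          C ((n : ℝ) * (5 * (n : ℝ) ^ 2 - 4 * (n : ℝ) + 1)) *
            (X - C (((n : ℝ) - 1) * ((n : ℝ) - 2) * rt2))) := by
  classical
  show somborCharpoly (myGraph n) = _
  rw [somborCharpoly, ← Matrix.charpoly_reindex (dihedralEquiv n) (somborMatrix (myGraph n)),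
    reindex_eq hn hodd]
  apply RatFunc.algebraMap_injective ℝ
  set φ := algebraMap (Polynomial ℝ) (RatFunc ℝ) with hφ
  have hLHS : φ ((NR n).charpoly) = ((Matrix.charmatrix (NR n)).map φ).det := by
    rw [Matrix.charpoly, RingHom.map_det]
    rfl
  rw [hLHS]
  have hmap : (Matrix.charmatrix (NR n)).map φ
      = Matrix.diagonal (fun i => (![φ X + φ (C (aR n)), φ X + φ (C (bR n)), φ X] :
          Fin 3 → RatFunc ℝ) (cl3 i))
        - Umat (RatFunc ℝ) {i : ZMod n // i ≠ (0 : ZMod n)} (ZMod n) *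
          (!![φ (C (aR n)), 0, φ (C (cR n)); 0, φ (C (bR n)), φ (C (dR n));
              φ (C (cR n)), φ (C (dR n)), 0] *
            (Umat (RatFunc ℝ) {i : ZMod n // i ≠ (0 : ZMod n)} (ZMod n))ᵀ) := by
    ext u v
    rw [Matrix.map_apply, Matrix.sub_apply, Umat_mul_apply, mul_Umat_transpose]
    by_cases h : u = v
    · subst h
      rw [Matrix.charmatrix_apply_eq, Matrix.diagonal_apply_eq]
      have h0 : NR n u u = 0 := by simp [NR]
      rw [h0, map_zero, sub_zero]
      rcases u with z | z | z <;>
        simp [cl3]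
    · rw [Matrix.charmatrix_apply_ne _ _ _ h, Matrix.diagonal_apply_ne _ h]
      have h0 : NR n u v
          = !![aR n, 0, cR n; 0, bR n, dR n; cR n, dR n, 0] (cl3 u) (cl3 v) := by
        simp [NR, h]
      rw [h0, zero_sub]
      rcases u with z | z | z <;> rcases v with z' | z' | z' <;>
        simp [cl3]
  rw [hmap]
  have hx : φ X ≠ 0 := RatFunc.algebraMap_ne_zero Polynomial.X_ne_zero
  have hxa : φ X + φ (C (aR n)) ≠ 0 := by
    rw [← map_add]
    exact RatFunc.algebraMap_ne_zero (Polynomial.X_add_C_ne_zero _)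
  have hxb : φ X + φ (C (bR n)) ≠ 0 := by
    rw [← map_add]
    exact RatFunc.algebraMap_ne_zero (Polynomial.X_add_C_ne_zero _)
  have hcard1 : Fintype.card {i : ZMod n // i ≠ (0 : ZMod n)} = n - 1 := by
    rw [Fintype.card_subtype_compl, Fintype.card_subtype_eq, ZMod.card]
  have hcard2 : Fintype.card (ZMod n) = n := ZMod.card n
  have hα : 1 ≤ Fintype.card {i : ZMod n // i ≠ (0 : ZMod n)} := by rw [hcard1]; omega
  have hβ : 1 ≤ Fintype.card (ZMod n) := by rw [hcard2]; omega
  rw [det_structured (φ (C (aR n))) (φ (C (bR n))) (φ (C (cR n))) (φ (C (dR n))) (φ X)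
    hx hxa hxb hα hβ, hcard1, hcard2]
  have he1 : n - 1 - 1 = n - 2 := by omega
  have h1n : 1 ≤ n := by omega
  have hcast1 : ((n - 1 : ℕ) : RatFunc ℝ) = (n : RatFunc ℝ) - 1 := by
    rw [Nat.cast_sub h1n, Nat.cast_one]
  rw [he1, hcast1]
  have hcsq : (cR n)^2 = 5*(n:ℝ)^2 - 6*(n:ℝ) + 2 := by
    rw [cR]
    apply Real.sq_sqrt
    nlinarith [sq_nonneg ((n:ℝ) - 1), sq_nonneg (2*(n:ℝ) - 1)]
  have hdsq : (dR n)^2 = 5*(n:ℝ)^2 - 4*(n:ℝ) + 1 := by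
    rw [dR]
    apply Real.sq_sqrt
    nlinarith [sq_nonneg (n:ℝ), sq_nonneg (2*(n:ℝ) - 1)]
  have hc2 : (φ (C (cR n)))^2 = φ (C (5*(n:ℝ)^2 - 6*(n:ℝ) + 2)) := by
    rw [← map_pow, ← map_pow, hcsq]
  have hd2 : (φ (C (dR n)))^2 = φ (C (5*(n:ℝ)^2 - 4*(n:ℝ) + 1)) := by
    rw [← map_pow, ← map_pow, hdsq]
  rw [hc2, hd2, aR, bR]
  simp only [_root_.map_mul, _root_.map_add, _root_.map_sub, _root_.map_pow,
    _root_.map_one, _root_.map_ofNat, map_natCast]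
  push_cast
  ring
end
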